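/- For every LTL formula Φ in the syntactic class TL_FG, there exists a deterministic ω-automaton A over the alphabet 2^V with a co-Büchi acceptance condition (given by a set F of states, a run is accepting iff it stays in F from some point on, i.e., visits states outside F only finitely often) such that A has at most 2^(2^|Φ|) states and A accepts exactly the set of infinite words w with w ⊨ Φ. -/

import Mathlib

/-- LTL formulas over atomic propositions `V`: the constant `true`, variables,
negation, disjunction, next (`X`), and strong until (`SU`). -/
inductive LTL (V : Type) : Type
  | tt : LTL V
  | var : V → LTL V
  | lnot : LTL V → LTL V
  | lor : LTL V → LTL V → LTL V
  | lnext : LTL V → LTL V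
  | lsu : LTL V → LTL V → LTL V

namespace LTL

variable {V : Type}

/-- Semantics: `Sat w φ i` means `w, i ⊨ φ` for an infinite word `w : ℕ → Set V`.
In particular `w, i ⊨ ψ SU φ` iff there is `k ≥ i` with `w, k ⊨ ψ` and
`w, j ⊨ φ` for all `i ≤ j < k`. -/
def Sat (w : ℕ → Set V) : LTL V → ℕ → Prop
  | tt, _ => True
  | var v, i => v ∈ w i
  | lnot φ, i => ¬ Sat w φ i
  | lor φ ψ, i => Sat w φ i ∨ Sat w ψ i
  | lnext φ, i => Sat w φ (i + 1)
  | lsu ψ φ, i => ∃ k, i ≤ k ∧ Sat w ψ k ∧ ∀ j, i ≤ j → j < k → Sat w φ j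

/-- Conjunction, as the abbreviation `¬(¬φ ∨ ¬ψ)`. -/
def land (φ ψ : LTL V) : LTL V := lnot (lor (lnot φ) (lnot ψ))

/-- `F φ := φ SU true`. -/
def lF (φ : LTL V) : LTL V := lsu φ tt

/-- `G φ := ¬ F ¬ φ`. -/
def lG (φ : LTL V) : LTL V := lnot (lF (lnot φ))

/-- Weak until: `ψ U φ := (ψ SU φ) ∨ G φ`. -/
def lwu (ψ φ : LTL V) : LTL V := lor (lsu ψ φ) (lG φ)

/-- Number of nodes of the syntax tree. -/
def size : LTL V → ℕ
  | tt => 1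
  | var _ => 1
  | lnot φ => size φ + 1
  | lor φ ψ => size φ + size ψ + 1
  | lnext φ => size φ + 1
  | lsu ψ φ => size ψ + size φ + 1

mutual
  /-- The syntactic class `TL_G`. -/
  inductive TLG : LTL V → Prop
    | var (v : V) : TLG (LTL.var v)
    | not {φ : LTL V} : TLF φ → TLG (LTL.lnot φ)
    | and {φ ψ : LTL V} : TLG φ → TLG ψ → TLG (LTL.land φ ψ)
    | or {φ ψ : LTL V} : TLG φ → TLG ψ → TLG (LTL.lor φ ψ)
    | next {φ : LTL V} : TLG φ → TLG (LTL.lnext φ)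
    | alw {φ : LTL V} : TLG φ → TLG (LTL.lG φ)
    | wu {ψ φ : LTL V} : TLG ψ → TLG φ → TLG (LTL.lwu ψ φ)
  /-- The syntactic class `TL_F`. -/
  inductive TLF : LTL V → Prop
    | var (v : V) : TLF (LTL.var v)
    | not {φ : LTL V} : TLG φ → TLF (LTL.lnot φ)
    | and {φ ψ : LTL V} : TLF φ → TLF ψ → TLF (LTL.land φ ψ)
    | or {φ ψ : LTL V} : TLF φ → TLF ψ → TLF (LTL.lor φ ψ)
    | next {φ : LTL V} : TLF φ → TLF (LTL.lnext φ)
    | ev {φ : LTL V} : TLF φ → TLF (LTL.lF φ)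
    | su {ψ φ : LTL V} : TLF ψ → TLF φ → TLF (LTL.lsu ψ φ)
end

end LTL

/-- The unique run of a deterministic automaton with transition function `δ`
and initial state `s0` on the infinite word `w`. -/
def detRun {S A : Type} (δ : S → A → S) (s0 : S) (w : ℕ → A) : ℕ → S
  | 0 => s0
  | t + 1 => δ (detRun δ s0 w t) (w t)

namespace LTL

variable {V : Type}

/-- The syntactic class `TL_Prefix`: the closure of `TL_G ∪ TL_F` under `¬, ∧, ∨`. -/
inductive TLPrefix : LTL V → Prop
  | g {φ : LTL V} : TLG φ → TLPrefix φ
  | f {φ : LTL V} : TLF φ → TLPrefix φ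
  | not {φ : LTL V} : TLPrefix φ → TLPrefix (LTL.lnot φ)
  | and {φ ψ : LTL V} : TLPrefix φ → TLPrefix ψ → TLPrefix (LTL.land φ ψ)
  | or {φ ψ : LTL V} : TLPrefix φ → TLPrefix ψ → TLPrefix (LTL.lor φ ψ)

end LTL

namespace LTL

variable {V : Type}

mutual
  /-- The syntactic class `TL_GF`. -/
  inductive TLGF : LTL V → Prop
    | pre {φ : LTL V} : TLPrefix φ → TLGF φ
    | not {φ : LTL V} : TLFG φ → TLGF (LTL.lnot φ)
    | and {φ ψ : LTL V} : TLGF φ → TLGF ψ → TLGF (LTL.land φ ψ)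
    | or {φ ψ : LTL V} : TLGF φ → TLGF ψ → TLGF (LTL.lor φ ψ)
    | next {φ : LTL V} : TLGF φ → TLGF (LTL.lnext φ)
    | alw {φ : LTL V} : TLGF φ → TLGF (LTL.lG φ)
    | wu {ψ φ : LTL V} : TLGF ψ → TLGF φ → TLGF (LTL.lwu ψ φ)
    | suF {ψ φ : LTL V} : TLF ψ → TLGF φ → TLGF (LTL.lsu ψ φ)
  /-- The syntactic class `TL_FG`. -/
  inductive TLFG : LTL V → Prop
    | pre {φ : LTL V} : TLPrefix φ → TLFG φ
    | not {φ : LTL V} : TLGF φ → TLFG (LTL.lnot φ)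
    | and {φ ψ : LTL V} : TLFG φ → TLFG ψ → TLFG (LTL.land φ ψ)
    | or {φ ψ : LTL V} : TLFG φ → TLFG ψ → TLFG (LTL.lor φ ψ)
    | next {φ : LTL V} : TLFG φ → TLFG (LTL.lnext φ)
    | ev {φ : LTL V} : TLFG φ → TLFG (LTL.lF φ)
    | su {ψ φ : LTL V} : TLFG ψ → TLFG φ → TLFG (LTL.lsu ψ φ)
    | wuG {ψ φ : LTL V} : TLFG ψ → TLG φ → TLFG (LTL.lwu ψ φ)
end

/-- The syntactic class `TL_Streett`: the closure of `TL_GF ∪ TL_FG` under `¬, ∧, ∨`. -/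
inductive TLStreett : LTL V → Prop
  | gf {φ : LTL V} : TLGF φ → TLStreett φ
  | fg {φ : LTL V} : TLFG φ → TLStreett φ
  | not {φ : LTL V} : TLStreett φ → TLStreett (LTL.lnot φ)
  | and {φ ψ : LTL V} : TLStreett φ → TLStreett ψ → TLStreett (LTL.land φ ψ)
  | or {φ ψ : LTL V} : TLStreett φ → TLStreett ψ → TLStreett (LTL.lor φ ψ)

end LTL

namespace TLFGProof

open LTL Classical

variable {V : Type}

/-- Infinite words. -/
abbrev Word (V : Type) := ℕ → Set V

/-- Signed proposition: `pol true P = P`, `pol false P = ¬ P`. -/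
def pol (s : Bool) (P : Prop) : Prop := if s then P else ¬ P

@[simp] lemma pol_true (P : Prop) : pol true P = P := rfl
@[simp] lemma pol_false (P : Prop) : pol false P = ¬P := rfl

/-- Semantic strong until. -/
def Psu (P₁ P₂ : Word V → ℕ → Prop) (w : Word V) (k : ℕ) : Prop :=
  ∃ m, k ≤ m ∧ P₁ w m ∧ ∀ j, k ≤ j → j < m → P₂ w j

/-- Semantic globally. -/
def Pg (P₂ : Word V → ℕ → Prop) (w : Word V) (k : ℕ) : Prop := ∀ j, k ≤ j → P₂ w j

/-- Semantic weak until. -/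
def Pwu (P₁ P₂ : Word V → ℕ → Prop) (w : Word V) (k : ℕ) : Prop :=
  Psu P₁ P₂ w k ∨ Pg P₂ w k

lemma Pwu_expand (P₁ P₂ : Word V → ℕ → Prop) (w : Word V) (t : ℕ) :
    Pwu P₁ P₂ w t ↔ P₁ w t ∨ (P₂ w t ∧ Pwu P₁ P₂ w (t+1)) := by
  constructor
  · rintro (⟨m, hm, h1, h2⟩ | hg)
    · rcases Nat.eq_or_lt_of_le hm with rfl | hlt
      · exact Or.inl h1
      · exact Or.inr ⟨h2 t le_rfl hlt, Or.inl ⟨m, hlt, h1, fun j hj hj' => h2 j (by omega) hj'⟩⟩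
    · exact Or.inr ⟨hg t le_rfl, Or.inr fun j hj => hg j (by omega)⟩
  · rintro (h1 | ⟨h2, (⟨m, hm, hm1, hm2⟩ | hg)⟩)
    · exact Or.inl ⟨t, le_rfl, h1, fun j h h' => absurd h' (by omega)⟩
    · refine Or.inl ⟨m, by omega, hm1, fun j hj hj' => ?_⟩
      rcases Nat.eq_or_lt_of_le hj with rfl | h
      · exact h2
      · exact hm2 j (by omega) hj'
    · refine Or.inr fun j hj => ?_
      rcases Nat.eq_or_lt_of_le hj with rfl | h
      · exact h2
      · exact hg j (by omega)

/-- Local validity of a claim-sequence. -/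
def Valid {C : Type} (ok : Set V → (C → Bool) → (C → Bool) → Prop) (w : Word V)
    (b : ℕ → C → Bool) : Prop := ∀ t, ok (w t) (b t) (b (t+1))

/-- `Good s inf n P` : there is a "constraint system" with fewer than `n`
coordinates which, at polarity `s`, soundly and completely tracks `P`
(completeness for finite demand-sets if `inf = false`, arbitrary ones
otherwise). -/
def Good (s inf : Bool) (n : ℕ) (P : Word V → ℕ → Prop) : Prop :=
  ∃ (C : Type) (_ : Fintype C) (ok : Set V → (C → Bool) → (C → Bool) → Prop)
    (rt : Set V → (C → Bool) → (C → Bool) → Bool) (acc : (C → Bool) → Prop),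
    Fintype.card C + 1 ≤ n ∧
    (∀ w b, Valid ok w b → (∃ N, ∀ t, N ≤ t → acc (b t)) →
       ∀ t, rt (w t) (b t) (b (t+1)) = s → pol s (P w t)) ∧
    (∀ (w : Word V) (K : Set ℕ), (inf = false → K.Finite) → (∀ k ∈ K, pol s (P w k)) →
       ∃ b, Valid ok w b ∧ (∃ N, ∀ t, N ≤ t → acc (b t)) ∧
         ∀ k ∈ K, rt (w k) (b k) (b (k+1)) = s)

lemma Good.mono_n {s inf : Bool} {n n' : ℕ} {P : Word V → ℕ → Prop}
    (h : Good s inf n P) (hn : n ≤ n') : Good s inf n' P := by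
  obtain ⟨C, iC, ok, rt, acc, hcard, hs, hc⟩ := h
  exact ⟨C, iC, ok, rt, acc, le_trans hcard hn, hs, hc⟩

lemma Good.of_inf {s : Bool} {inf : Bool} {n : ℕ} {P : Word V → ℕ → Prop}
    (h : Good s true n P) : Good s inf n P := by
  obtain ⟨C, iC, ok, rt, acc, hcard, hs, hc⟩ := h
  exact ⟨C, iC, ok, rt, acc, hcard, hs, fun w K _ hK => hc w K (by simp) hK⟩

lemma Good.congr {s inf : Bool} {n : ℕ} {P Q : Word V → ℕ → Prop}
    (h : Good s inf n P) (hPQ : ∀ w t, P w t ↔ Q w t) : Good s inf n Q := by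
  obtain ⟨C, iC, ok, rt, acc, hcard, hs, hc⟩ := h
  refine ⟨C, iC, ok, rt, acc, hcard, fun w b hv ha t hrt => ?_, fun w K hfin hK => ?_⟩
  · have := hs w b hv ha t hrt
    cases s <;> simp_all [hPQ w t]
  · refine hc w K hfin fun k hk => ?_
    have := hK k hk
    cases s <;> simp_all [hPQ w k]

/-- variables -/
lemma good_var (s inf : Bool) (v : V) : Good s inf 1 (fun w t => v ∈ w t) := by
  classical
  refine ⟨PEmpty, inferInstance, fun _ _ _ => True,
    fun a _ _ => if v ∈ a then true else false, fun _ => True, by simp, ?_, ?_⟩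
  · intro w b _ _ t hrt
    by_cases hm : v ∈ w t <;> cases s <;> simp [hm] at hrt ⊢ <;> simp [pol, hm]
  · intro w K _ hK
    refine ⟨fun _ _ => false, fun _ => trivial, ⟨0, fun _ _ => trivial⟩, fun k hk => ?_⟩
    have h := hK k hk
    cases s <;> simp [pol] at h <;> simp [h]

/-- truth -/
lemma good_tt (s inf : Bool) (n : ℕ) (hn : 1 ≤ n) :
    Good s inf n (fun (_ : Word V) (_ : ℕ) => True) := by
  refine ⟨PEmpty, inferInstance, fun _ _ _ => True, fun _ _ _ => true, fun _ => True,
    by simpa, ?_, ?_⟩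
  · intro w b _ _ t hrt
    cases s <;> simp [pol] <;> simp at hrt
  · intro w K _ hK
    refine ⟨fun _ _ => false, fun _ => trivial, ⟨0, fun _ _ => trivial⟩, fun k hk => ?_⟩
    have h := hK k hk
    cases s <;> simp [pol] at h ⊢

/-- falsehood -/
lemma good_ff (s inf : Bool) (n : ℕ) (hn : 1 ≤ n) :
    Good s inf n (fun (_ : Word V) (_ : ℕ) => False) := by
  refine ⟨PEmpty, inferInstance, fun _ _ _ => True, fun _ _ _ => false, fun _ => True,
    by simpa, ?_, ?_⟩
  · intro w b _ _ t hrt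
    cases s <;> simp [pol] <;> simp at hrt
  · intro w K _ hK
    refine ⟨fun _ _ => false, fun _ => trivial, ⟨0, fun _ _ => trivial⟩, fun k hk => ?_⟩
    have h := hK k hk
    cases s <;> simp [pol] at h ⊢

/-- negation flips the polarity. -/
lemma good_not {s inf : Bool} {n : ℕ} {P : Word V → ℕ → Prop}
    (h : Good s inf n P) : Good (!s) inf (n+1) (fun w t => ¬ P w t) := by
  obtain ⟨C, iC, ok, rt, acc, hcard, hs, hc⟩ := h
  refine ⟨C, iC, ok, fun a q q' => !(rt a q q'), acc, by omega, ?_, ?_⟩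
  · intro w b hv ha t hrt
    have h2 : rt (w t) (b t) (b (t+1)) = s := by
      cases hb : rt (w t) (b t) (b (t+1)) <;> cases s <;> simp [hb] at hrt ⊢
    have h3 := hs w b hv ha t h2
    cases s <;> simp [pol] at h3 ⊢ <;> exact h3
  · intro w K hfin hK
    have hK' : ∀ k ∈ K, pol s (P w k) := by
      intro k hk
      have h := hK k hk
      cases s <;> simp [pol] at h ⊢ <;> tauto
    obtain ⟨b, hv, ha, hrt⟩ := hc w K hfin hK'
    refine ⟨b, hv, ha, fun k hk => ?_⟩
    have h := hrt k hk
    cases s <;> simp [h]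

end TLFGProof
namespace TLFGProof

open LTL Classical

variable {V : Type}

section OrNext

/-- disjunction -/
lemma good_or {s inf : Bool} {n₁ n₂ : ℕ} {P₁ P₂ : Word V → ℕ → Prop}
    (h₁ : Good s inf n₁ P₁) (h₂ : Good s inf n₂ P₂) :
    Good s inf (n₁ + n₂ + 1) (fun w t => P₁ w t ∨ P₂ w t) := by
  classical
  obtain ⟨C₁, i₁, ok₁, rt₁, acc₁, hcard₁, hs₁, hc₁⟩ := h₁
  obtain ⟨C₂, i₂, ok₂, rt₂, acc₂, hcard₂, hs₂, hc₂⟩ := h₂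
  refine ⟨C₁ ⊕ C₂, inferInstance,
    fun a q q' => ok₁ a (fun c => q (.inl c)) (fun c => q' (.inl c)) ∧
                  ok₂ a (fun c => q (.inr c)) (fun c => q' (.inr c)),
    fun a q q' => rt₁ a (fun c => q (.inl c)) (fun c => q' (.inl c)) ||
                  rt₂ a (fun c => q (.inr c)) (fun c => q' (.inr c)),
    fun q => acc₁ (fun c => q (.inl c)) ∧ acc₂ (fun c => q (.inr c)),
    by simp [Fintype.card_sum]; omega, ?_, ?_⟩
  · intro w b hv ha t hrt
    obtain ⟨N, hN⟩ := ha
    have hv₁ : Valid ok₁ w (fun t c => b t (.inl c)) := fun u => (hv u).1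
    have hv₂ : Valid ok₂ w (fun t c => b t (.inr c)) := fun u => (hv u).2
    have ha₁ : ∃ N, ∀ u, N ≤ u → acc₁ (fun c => b u (.inl c)) := ⟨N, fun u hu => (hN u hu).1⟩
    have ha₂ : ∃ N, ∀ u, N ≤ u → acc₂ (fun c => b u (.inr c)) := ⟨N, fun u hu => (hN u hu).2⟩
    cases s with
    | true =>
      simp only [Bool.or_eq_true] at hrt
      rcases hrt with h | h
      · exact Or.inl (hs₁ w _ hv₁ ha₁ t h)
      · exact Or.inr (hs₂ w _ hv₂ ha₂ t h)
    | false =>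
      simp only [Bool.or_eq_false_iff] at hrt
      have g₁ := hs₁ w _ hv₁ ha₁ t hrt.1
      have g₂ := hs₂ w _ hv₂ ha₂ t hrt.2
      simp only [pol_false] at g₁ g₂ ⊢
      tauto
  · intro w K hfin hK
    cases s with
    | true =>
      set K₁ : Set ℕ := {k ∈ K | P₁ w k} with hK₁def
      set K₂ : Set ℕ := {k ∈ K | ¬ P₁ w k} with hK₂def
      obtain ⟨b₁, hv₁, ⟨N₁, hN₁⟩, hrt₁⟩ := hc₁ w K₁
        (fun h => (hfin h).subset (by intro x hx; exact hx.1))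
        (fun k hk => by simpa using hk.2)
      obtain ⟨b₂, hv₂, ⟨N₂, hN₂⟩, hrt₂⟩ := hc₂ w K₂
        (fun h => (hfin h).subset (by intro x hx; exact hx.1))
        (fun k hk => by
          have h1 := hK k hk.1
          have h2 := hk.2
          simp only [pol_true] at h1 ⊢
          tauto)
      refine ⟨fun t => Sum.elim (b₁ t) (b₂ t), fun t => ⟨hv₁ t, hv₂ t⟩,
        ⟨max N₁ N₂, fun u hu => ⟨hN₁ u (le_of_max_le_left hu), hN₂ u (le_of_max_le_right hu)⟩⟩,
        fun k hk => ?_⟩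
      by_cases h1 : P₁ w k
      · have := hrt₁ k ⟨hk, h1⟩; simp_all
      · have := hrt₂ k ⟨hk, h1⟩; simp_all
    | false =>
      obtain ⟨b₁, hv₁, ⟨N₁, hN₁⟩, hrt₁⟩ := hc₁ w K hfin
        (fun k hk => by have := hK k hk; simp only [pol_false] at this ⊢; tauto)
      obtain ⟨b₂, hv₂, ⟨N₂, hN₂⟩, hrt₂⟩ := hc₂ w K hfin
        (fun k hk => by have := hK k hk; simp only [pol_false] at this ⊢; tauto)
      refine ⟨fun t => Sum.elim (b₁ t) (b₂ t), fun t => ⟨hv₁ t, hv₂ t⟩,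
        ⟨max N₁ N₂, fun u hu => ⟨hN₁ u (le_of_max_le_left hu), hN₂ u (le_of_max_le_right hu)⟩⟩,
        fun k hk => ?_⟩
      have g₁ := hrt₁ k hk
      have g₂ := hrt₂ k hk
      simp [g₁, g₂]

/-- next -/
lemma good_next {s inf : Bool} {n : ℕ} {P : Word V → ℕ → Prop}
    (h : Good s inf n P) : Good s inf (n + 1) (fun w t => P w (t + 1)) := by
  classical
  obtain ⟨C, iC, ok, rt, acc, hcard, hs, hc⟩ := h
  refine ⟨Option C, inferInstance,
    fun a q q' => ok a (fun c => q (some c)) (fun c => q' (some c)) ∧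
      (q none = s → rt a (fun c => q (some c)) (fun c => q' (some c)) = s),
    fun _ _ q' => q' none,
    fun q => acc (fun c => q (some c)),
    by simp; omega, ?_, ?_⟩
  · intro w b hv ha t hrt
    obtain ⟨N, hN⟩ := ha
    have hv' : Valid ok w (fun t c => b t (some c)) := fun u => (hv u).1
    have ha' : ∃ N, ∀ u, N ≤ u → acc (fun c => b u (some c)) := ⟨N, fun u hu => hN u hu⟩
    exact hs w _ hv' ha' (t+1) ((hv (t+1)).2 hrt)
  · intro w K hfin hK
    set K' : Set ℕ := (fun k => k + 1) '' K with hK'def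
    obtain ⟨b, hv, ⟨N, hN⟩, hrt⟩ := hc w K'
      (fun h => ((hfin h).image _))
      (fun k hk => by obtain ⟨k₀, hk₀, rfl⟩ := hk; exact hK k₀ hk₀)
    refine ⟨fun t => fun c => match c with
        | some c => b t c
        | none => if t ∈ K' then s else !s,
      fun t => ⟨hv t, fun hc' => ?_⟩,
      ⟨N, fun u hu => hN u hu⟩, fun k hk => ?_⟩
    · simp only at hc'
      by_cases ht : t ∈ K'
      · exact hrt t ht
      · rw [if_neg ht] at hc'; exact absurd hc' (Bool.not_ne_self s)
    · show (if k + 1 ∈ K' then s else !s) = s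
      split_ifs with h
      · rfl
      · exact absurd (⟨k, hk, rfl⟩ : k + 1 ∈ K') h

end OrNext

end TLFGProof
namespace TLFGProof

open LTL Classical

variable {V : Type}

section FixCombinators

variable {n₁ n₂ : ℕ} {P₁ P₂ : Word V → ℕ → Prop}

/-- strong until, positive polarity, finite demand sets -/
lemma good_su_pos (h₁ : Good true false n₁ P₁) (h₂ : Good true false n₂ P₂) :
    Good true false (n₁ + n₂ + 1) (Psu P₁ P₂) := by
  classical
  obtain ⟨C₁, i₁, ok₁, rt₁, acc₁, hcard₁, hs₁, hc₁⟩ := h₁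
  obtain ⟨C₂, i₂, ok₂, rt₂, acc₂, hcard₂, hs₂, hc₂⟩ := h₂
  refine ⟨Option (C₁ ⊕ C₂), inferInstance,
    fun a q q' => ok₁ a (fun c => q (some (.inl c))) (fun c => q' (some (.inl c))) ∧
      ok₂ a (fun c => q (some (.inr c))) (fun c => q' (some (.inr c))) ∧
      (q none = true →
        (rt₁ a (fun c => q (some (.inl c))) (fun c => q' (some (.inl c))) ||
         (rt₂ a (fun c => q (some (.inr c))) (fun c => q' (some (.inr c))) && q' none)) = true),
    fun _ q _ => q none,
    fun q => acc₁ (fun c => q (some (.inl c))) ∧ acc₂ (fun c => q (some (.inr c))) ∧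
      q none = false,
    by simp [Fintype.card_sum]; omega, ?_, ?_⟩
  · -- soundness
    intro w b hv ha t hrt
    obtain ⟨N, hN⟩ := ha
    set b1 : ℕ → C₁ → Bool := fun t c => b t (some (.inl c)) with hb1
    set b2 : ℕ → C₂ → Bool := fun t c => b t (some (.inr c)) with hb2
    have hv₁ : Valid ok₁ w b1 := fun u => (hv u).1
    have hv₂ : Valid ok₂ w b2 := fun u => (hv u).2.1
    have ha₁ : ∃ N, ∀ u, N ≤ u → acc₁ (b1 u) := ⟨N, fun u hu => (hN u hu).1⟩
    have ha₂ : ∃ N, ∀ u, N ≤ u → acc₂ (b2 u) := ⟨N, fun u hu => (hN u hu).2.1⟩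
    have chain : ∀ u, t ≤ u →
        ((∀ x, t ≤ x → x < u → rt₁ (w x) (b1 x) (b1 (x+1)) ≠ true) →
          b u none = true ∧ ∀ x, t ≤ x → x < u → rt₂ (w x) (b2 x) (b2 (x+1)) = true) := by
      intro u hu
      induction u, hu using Nat.le_induction with
      | base => exact fun _ => ⟨hrt, fun x h1 h2 => absurd h2 (by omega)⟩
      | succ u hu IH =>
        intro hnone
        obtain ⟨hbu, hr2⟩ := IH (fun x h1 h2 => hnone x h1 (by omega))
        have himp := (hv u).2.2 hbu
        have hr1 : rt₁ (w u) (b1 u) (b1 (u+1)) = false := by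
          cases hx : rt₁ (w u) (b1 u) (b1 (u+1))
          · rfl
          · exact absurd hx (hnone u hu (by omega))
        rw [hr1] at himp
        simp only [Bool.false_or, Bool.and_eq_true] at himp
        refine ⟨himp.2, fun x h1 h2 => ?_⟩
        rcases Nat.lt_or_ge x u with h | h
        · exact hr2 x h1 h
        · have hxu : x = u := by omega
          subst hxu; exact himp.1
    have hex : ∃ u, t ≤ u ∧ rt₁ (w u) (b1 u) (b1 (u+1)) = true := by
      by_contra hno
      push_neg at hno
      have h1 := (chain (max t N) (le_max_left _ _) (fun x hx _ => hno x hx)).1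
      have h2 := (hN (max t N) (le_max_right _ _)).2.2
      rw [h1] at h2
      simp at h2
    set k := Nat.find hex with hkdef
    obtain ⟨hk, hk1⟩ := Nat.find_spec hex
    have hchain := chain k hk (fun x h1 h2 hc => Nat.find_min hex h2 ⟨h1, hc⟩)
    simp only [pol_true]
    exact ⟨k, hk, by simpa using hs₁ w b1 hv₁ ha₁ k hk1,
      fun j hj hj' => by simpa using hs₂ w b2 hv₂ ha₂ j (hchain.2 j hj hj')⟩
  · -- completeness
    intro w K hfin hK
    have hKfin : K.Finite := hfin rfl
    have hm : ∀ k ∈ K, ∃ m, k ≤ m ∧ P₁ w m ∧ ∀ j, k ≤ j → j < m → P₂ w j :=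
      fun k hk => by simpa [Psu] using hK k hk
    set m : ℕ → ℕ := fun k => if h : k ∈ K then Classical.choose (hm k h) else 0 with hmdef
    have hmspec : ∀ k ∈ K, k ≤ m k ∧ P₁ w (m k) ∧ ∀ j, k ≤ j → j < m k → P₂ w j := by
      intro k hk
      have := Classical.choose_spec (hm k hk)
      simpa [hmdef, dif_pos hk] using this
    set K₁ : Set ℕ := m '' K with hK₁def
    set K₂ : Set ℕ := {x | ∃ k ∈ K, k ≤ x ∧ x < m k} with hK₂def
    set S : Set ℕ := {x | ∃ k ∈ K, k ≤ x ∧ x ≤ m k} with hSdef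
    have hK₂fin : K₂.Finite := by
      have : K₂ ⊆ ⋃ k ∈ K, Set.Ico k (m k) := by
        rintro x ⟨k, hk, h1, h2⟩
        exact Set.mem_biUnion hk ⟨h1, h2⟩
      exact (hKfin.biUnion (fun k _ => Set.finite_Ico _ _)).subset this
    have hSfin : S.Finite := by
      have : S ⊆ ⋃ k ∈ K, Set.Icc k (m k) := by
        rintro x ⟨k, hk, h1, h2⟩
        exact Set.mem_biUnion hk ⟨h1, h2⟩
      exact (hKfin.biUnion (fun k _ => Set.finite_Icc _ _)).subset this
    obtain ⟨B, hB⟩ := hSfin.bddAbove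
    obtain ⟨b₁, hv₁, ⟨N₁, hN₁⟩, hrt₁⟩ := hc₁ w K₁ (fun _ => hKfin.image m)
      (by rintro x ⟨k, hk, rfl⟩; simpa using (hmspec k hk).2.1)
    obtain ⟨b₂, hv₂, ⟨N₂, hN₂⟩, hrt₂⟩ := hc₂ w K₂ (fun _ => hK₂fin)
      (by rintro x ⟨k, hk, h1, h2⟩; simpa using (hmspec k hk).2.2 x h1 h2)
    refine ⟨fun t c => match c with
        | some (.inl c) => b₁ t c
        | some (.inr c) => b₂ t c
        | none => if t ∈ S then true else false,
      fun t => ⟨hv₁ t, hv₂ t, ?_⟩,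
      ⟨max (max N₁ N₂) (B + 1), fun u hu => ⟨hN₁ u (by omega), hN₂ u (by omega), ?_⟩⟩,
      fun k hk => ?_⟩
    · -- the until constraint
      show (if t ∈ S then true else false) = true →
        (rt₁ (w t) (b₁ t) (b₁ (t+1)) ||
         (rt₂ (w t) (b₂ t) (b₂ (t+1)) && (if t + 1 ∈ S then true else false))) = true
      intro hin
      have htS : t ∈ S := by
        by_contra hns
        rw [if_neg hns] at hin
        exact absurd hin (by simp)
      by_cases h2 : t ∈ K₂
      · have hb2 := hrt₂ t h2
        obtain ⟨k', hk', hx1, hx2⟩ := h2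
        have ht1 : t + 1 ∈ S := ⟨k', hk', by omega, by omega⟩
        rw [hb2, if_pos ht1]
        simp
      · obtain ⟨k, hk, h1', h2'⟩ := htS
        have htm : t = m k := by
          rcases Nat.lt_or_ge t (m k) with h | h
          · exact absurd ⟨k, hk, h1', h⟩ h2
          · omega
        have hmem : t ∈ K₁ := ⟨k, hk, htm.symm⟩
        have hb1 := hrt₁ t hmem
        rw [hb1]
        simp
    · -- eventually no pending obligation
      show (if u ∈ S then true else false) = false
      have : u ∉ S := fun hin => by have := hB hin; omega
      rw [if_neg this]
    · -- root claims
      show (if k ∈ S then true else false) = true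
      have : k ∈ S := ⟨k, hk, le_rfl, (hmspec k hk).1⟩
      rw [if_pos this]

end FixCombinators

end TLFGProof
namespace TLFGProof

open LTL Classical

variable {V : Type}

section FixCombinators2

variable {n₁ n₂ : ℕ} {P₁ P₂ : Word V → ℕ → Prop}

/-- strong until, negative polarity -/
lemma good_su_neg {inf : Bool} (h₁ : Good false true n₁ P₁) (h₂ : Good false inf n₂ P₂) :
    Good false inf (n₁ + n₂ + 1) (Psu P₁ P₂) := by
  classical
  obtain ⟨C₁, i₁, ok₁, rt₁, acc₁, hcard₁, hs₁, hc₁⟩ := h₁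
  obtain ⟨C₂, i₂, ok₂, rt₂, acc₂, hcard₂, hs₂, hc₂⟩ := h₂
  refine ⟨Option (C₁ ⊕ C₂), inferInstance,
    fun a q q' => ok₁ a (fun c => q (some (.inl c))) (fun c => q' (some (.inl c))) ∧
      ok₂ a (fun c => q (some (.inr c))) (fun c => q' (some (.inr c))) ∧
      (q none = false →
        (rt₁ a (fun c => q (some (.inl c))) (fun c => q' (some (.inl c))) ||
         (rt₂ a (fun c => q (some (.inr c))) (fun c => q' (some (.inr c))) && q' none)) = false),
    fun _ q _ => q none,
    fun q => acc₁ (fun c => q (some (.inl c))) ∧ acc₂ (fun c => q (some (.inr c))),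
    by simp [Fintype.card_sum]; omega, ?_, ?_⟩
  · -- soundness
    intro w b hv ha t hrt
    obtain ⟨N, hN⟩ := ha
    set b1 : ℕ → C₁ → Bool := fun t c => b t (some (.inl c)) with hb1
    set b2 : ℕ → C₂ → Bool := fun t c => b t (some (.inr c)) with hb2
    have hv₁ : Valid ok₁ w b1 := fun u => (hv u).1
    have hv₂ : Valid ok₂ w b2 := fun u => (hv u).2.1
    have ha₁ : ∃ N, ∀ u, N ≤ u → acc₁ (b1 u) := ⟨N, fun u hu => (hN u hu).1⟩
    have ha₂ : ∃ N, ∀ u, N ≤ u → acc₂ (b2 u) := ⟨N, fun u hu => (hN u hu).2⟩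
    simp only [pol_false]
    rintro ⟨m, hm, hP1, hP2⟩
    have chain : ∀ u, t ≤ u → u ≤ m → b u none = false := by
      intro u hu
      induction u, hu using Nat.le_induction with
      | base => exact fun _ => hrt
      | succ u hu IH =>
        intro hum
        have hbu := IH (by omega)
        have himp := (hv u).2.2 hbu
        simp only [Bool.or_eq_false_iff, Bool.and_eq_false_iff] at himp
        have hP2u : P₂ w u := hP2 u hu (by omega)
        rcases himp.2 with h | h
        · have := hs₂ w b2 hv₂ ha₂ u h
          simp only [pol_false] at this
          exact absurd hP2u this
        · exact h
    have hbm := chain m hm le_rfl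
    have himp := (hv m).2.2 hbm
    simp only [Bool.or_eq_false_iff] at himp
    have := hs₁ w b1 hv₁ ha₁ m himp.1
    simp only [pol_false] at this
    exact this hP1
  · -- completeness
    intro w K hfin hK
    set U : Set ℕ := {x | ∃ k ∈ K, k ≤ x ∧ ∀ j, k ≤ j → j < x → P₂ w j} with hUdef
    have hU1 : ∀ x ∈ U, ¬ P₁ w x := by
      rintro x ⟨k, hk, h1, h2⟩ hP1
      have := hK k hk
      simp only [pol_false] at this
      exact this ⟨x, h1, hP1, h2⟩
    have hUnext : ∀ x ∈ U, P₂ w x → x + 1 ∈ U := by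
      rintro x ⟨k, hk, h1, h2⟩ hP2
      refine ⟨k, hk, by omega, fun j hj hj' => ?_⟩
      rcases Nat.lt_or_ge j x with h | h
      · exact h2 j hj h
      · have : j = x := by omega
        subst this; exact hP2
    set K₂ : Set ℕ := {x | x ∈ U ∧ x + 1 ∉ U} with hK₂def
    have hK₂P : ∀ x ∈ K₂, ¬ P₂ w x := fun x hx hP2 => hx.2 (hUnext x hx.1 hP2)
    have hwit : ∀ x ∈ K₂, ∃ k, k ∈ K ∧ k ≤ x ∧ ∀ j, k ≤ j → j < x → P₂ w j := by
      rintro x ⟨⟨k, hk, h1, h2⟩, _⟩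
      exact ⟨k, hk, h1, h2⟩
    set κ : ℕ → ℕ := fun x => if h : x ∈ K₂ then Classical.choose (hwit x h) else 0 with hκdef
    have hκspec : ∀ x ∈ K₂, κ x ∈ K ∧ κ x ≤ x ∧ ∀ j, κ x ≤ j → j < x → P₂ w j := by
      intro x hx
      have := Classical.choose_spec (hwit x hx)
      simpa [hκdef, dif_pos hx] using this
    have haux : ∀ x x', x ∈ K₂ → x' ∈ K₂ → κ x = κ x' → x < x' → False := by
      intro x x' hx hx' heq hlt
      obtain ⟨hk1, hk2, hk3⟩ := hκspec x hx
      obtain ⟨hk1', hk2', hk3'⟩ := hκspec x' hx'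
      rw [heq] at hk2 hk3
      exact hx.2 ⟨κ x', hk1', by omega, fun j h1 h2 => hk3' j h1 (by omega)⟩
    have hinj : Set.InjOn κ K₂ := by
      intro x hx x' hx' heq
      rcases Nat.lt_trichotomy x x' with h | h | h
      · exact absurd (haux x x' hx hx' heq h) id
      · exact h
      · exact absurd (haux x' x hx' hx heq.symm h) id
    have hK₂fin : inf = false → K₂.Finite := by
      intro hi
      refine Set.Finite.of_finite_image (((hfin hi).subset ?_)) hinj
      rintro y ⟨x, hx, rfl⟩
      exact (hκspec x hx).1
    obtain ⟨b₁, hv₁, ⟨N₁, hN₁⟩, hrt₁⟩ := hc₁ w U (fun h => absurd h (by simp))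
      (fun x hx => by simpa using hU1 x hx)
    obtain ⟨b₂, hv₂, ⟨N₂, hN₂⟩, hrt₂⟩ := hc₂ w K₂ hK₂fin
      (fun x hx => by simpa using hK₂P x hx)
    refine ⟨fun t c => match c with
        | some (.inl c) => b₁ t c
        | some (.inr c) => b₂ t c
        | none => if t ∈ U then false else true,
      fun t => ⟨hv₁ t, hv₂ t, ?_⟩,
      ⟨max N₁ N₂, fun u hu => ⟨hN₁ u (by omega), hN₂ u (by omega)⟩⟩,
      fun k hk => ?_⟩
    · show (if t ∈ U then false else true) = false →
        (rt₁ (w t) (b₁ t) (b₁ (t+1)) ||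
         (rt₂ (w t) (b₂ t) (b₂ (t+1)) && (if t + 1 ∈ U then false else true))) = false
      intro hin
      have htU : t ∈ U := by
        by_contra hns
        rw [if_neg hns] at hin
        exact absurd hin (by simp)
      rw [hrt₁ t htU]
      by_cases h2 : t + 1 ∈ U
      · rw [if_pos h2]
        simp
      · rw [hrt₂ t ⟨htU, h2⟩]
        simp
    · show (if k ∈ U then false else true) = false
      have : k ∈ U := ⟨k, hk, le_rfl, fun j h1 h2 => absurd h2 (by omega)⟩
      rw [if_pos this]

end FixCombinators2

end TLFGProof
namespace TLFGProof

open LTL Classical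

variable {V : Type}

section FixCombinators3

variable {n₁ n₂ : ℕ} {P₁ P₂ : Word V → ℕ → Prop}

/-- weak until, positive polarity: shared soundness.  The system is
`Option (C₁ ⊕ C₂)` with the same local constraint as for strong until but no
acceptance obligation on the extra coordinate. -/
private lemma wu_pos_core
    {C₁ C₂ : Type} [Fintype C₁] [Fintype C₂]
    {ok₁ : Set V → (C₁ → Bool) → (C₁ → Bool) → Prop}
    {rt₁ : Set V → (C₁ → Bool) → (C₁ → Bool) → Bool} {acc₁ : (C₁ → Bool) → Prop}
    {ok₂ : Set V → (C₂ → Bool) → (C₂ → Bool) → Prop}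
    {rt₂ : Set V → (C₂ → Bool) → (C₂ → Bool) → Bool} {acc₂ : (C₂ → Bool) → Prop}
    (hs₁ : ∀ w b, Valid ok₁ w b → (∃ N, ∀ t, N ≤ t → acc₁ (b t)) →
       ∀ t, rt₁ (w t) (b t) (b (t+1)) = true → pol true (P₁ w t))
    (hs₂ : ∀ w b, Valid ok₂ w b → (∃ N, ∀ t, N ≤ t → acc₂ (b t)) →
       ∀ t, rt₂ (w t) (b t) (b (t+1)) = true → pol true (P₂ w t)) :
    ∀ (w : Word V) (b : ℕ → Option (C₁ ⊕ C₂) → Bool),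
      Valid (fun a q q' => ok₁ a (fun c => q (some (.inl c))) (fun c => q' (some (.inl c))) ∧
        ok₂ a (fun c => q (some (.inr c))) (fun c => q' (some (.inr c))) ∧
        (q none = true →
          (rt₁ a (fun c => q (some (.inl c))) (fun c => q' (some (.inl c))) ||
           (rt₂ a (fun c => q (some (.inr c))) (fun c => q' (some (.inr c))) && q' none)) = true)) w b →
      (∃ N, ∀ t, N ≤ t → acc₁ (fun c => b t (some (.inl c))) ∧ acc₂ (fun c => b t (some (.inr c)))) →
      ∀ t, b t none = true → pol true (Pwu P₁ P₂ w t) := by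
  classical
  intro w b hv ha t hrt
  obtain ⟨N, hN⟩ := ha
  set b1 : ℕ → C₁ → Bool := fun t c => b t (some (.inl c)) with hb1
  set b2 : ℕ → C₂ → Bool := fun t c => b t (some (.inr c)) with hb2
  have hv₁ : Valid ok₁ w b1 := fun u => (hv u).1
  have hv₂ : Valid ok₂ w b2 := fun u => (hv u).2.1
  have ha₁ : ∃ N, ∀ u, N ≤ u → acc₁ (b1 u) := ⟨N, fun u hu => (hN u hu).1⟩
  have ha₂ : ∃ N, ∀ u, N ≤ u → acc₂ (b2 u) := ⟨N, fun u hu => (hN u hu).2⟩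
  have chain : ∀ u, t ≤ u →
      ((∀ x, t ≤ x → x < u → rt₁ (w x) (b1 x) (b1 (x+1)) ≠ true) →
        b u none = true ∧ ∀ x, t ≤ x → x < u → rt₂ (w x) (b2 x) (b2 (x+1)) = true) := by
    intro u hu
    induction u, hu using Nat.le_induction with
    | base => exact fun _ => ⟨hrt, fun x h1 h2 => absurd h2 (by omega)⟩
    | succ u hu IH =>
      intro hnone
      obtain ⟨hbu, hr2⟩ := IH (fun x h1 h2 => hnone x h1 (by omega))
      have himp := (hv u).2.2 hbu
      have hr1 : rt₁ (w u) (b1 u) (b1 (u+1)) = false := by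
        cases hx : rt₁ (w u) (b1 u) (b1 (u+1))
        · rfl
        · exact absurd hx (hnone u hu (by omega))
      rw [hr1] at himp
      simp only [Bool.false_or, Bool.and_eq_true] at himp
      refine ⟨himp.2, fun x h1 h2 => ?_⟩
      rcases Nat.lt_or_ge x u with h | h
      · exact hr2 x h1 h
      · have hxu : x = u := by omega
        subst hxu; exact himp.1
  simp only [pol_true]
  by_cases hex : ∃ u, t ≤ u ∧ rt₁ (w u) (b1 u) (b1 (u+1)) = true
  · set k := Nat.find hex with hkdef
    obtain ⟨hk, hk1⟩ := Nat.find_spec hex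
    have hchain := chain k hk (fun x h1 h2 hc => Nat.find_min hex h2 ⟨h1, hc⟩)
    exact Or.inl ⟨k, hk, by simpa using hs₁ w b1 hv₁ ha₁ k hk1,
      fun j hj hj' => by simpa using hs₂ w b2 hv₂ ha₂ j (hchain.2 j hj hj')⟩
  · push_neg at hex
    refine Or.inr fun j hj => ?_
    have := (chain (j+1) (by omega) (fun x h1 _ => hex x h1)).2 j hj (by omega)
    simpa using hs₂ w b2 hv₂ ha₂ j this

/-- weak until, positive polarity, arbitrary demand sets -/
lemma good_wu_pos_inf (h₁ : Good true true n₁ P₁) (h₂ : Good true true n₂ P₂) :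
    Good true true (n₁ + n₂ + 1) (Pwu P₁ P₂) := by
  classical
  obtain ⟨C₁, i₁, ok₁, rt₁, acc₁, hcard₁, hs₁, hc₁⟩ := h₁
  obtain ⟨C₂, i₂, ok₂, rt₂, acc₂, hcard₂, hs₂, hc₂⟩ := h₂
  refine ⟨Option (C₁ ⊕ C₂), inferInstance,
    fun a q q' => ok₁ a (fun c => q (some (.inl c))) (fun c => q' (some (.inl c))) ∧
      ok₂ a (fun c => q (some (.inr c))) (fun c => q' (some (.inr c))) ∧
      (q none = true →
        (rt₁ a (fun c => q (some (.inl c))) (fun c => q' (some (.inl c))) ||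
         (rt₂ a (fun c => q (some (.inr c))) (fun c => q' (some (.inr c))) && q' none)) = true),
    fun _ q _ => q none,
    fun q => acc₁ (fun c => q (some (.inl c))) ∧ acc₂ (fun c => q (some (.inr c))),
    by simp [Fintype.card_sum]; omega,
    fun w b hv ha t hrt => wu_pos_core hs₁ hs₂ w b hv ha t hrt, ?_⟩
  -- completeness
  intro w K _ hK
  set W : Set ℕ := {t | Pwu P₁ P₂ w t} with hWdef
  have hKW : K ⊆ W := fun k hk => by simpa [hWdef] using hK k hk
  set K₁ : Set ℕ := {t | t ∈ W ∧ P₁ w t} with hK₁def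
  set K₂ : Set ℕ := {t | t ∈ W ∧ ¬ P₁ w t} with hK₂def
  obtain ⟨b₁, hv₁, ⟨N₁, hN₁⟩, hrt₁⟩ := hc₁ w K₁ (fun h => absurd h (by simp))
    (fun x hx => by simpa using hx.2)
  obtain ⟨b₂, hv₂, ⟨N₂, hN₂⟩, hrt₂⟩ := hc₂ w K₂ (fun h => absurd h (by simp))
    (fun x hx => by
      have h1 := (Pwu_expand P₁ P₂ w x).1 hx.1
      have h2 := hx.2
      simp only [pol_true]
      tauto)
  refine ⟨fun t c => match c with
      | some (.inl c) => b₁ t c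
      | some (.inr c) => b₂ t c
      | none => if t ∈ W then true else false,
    fun t => ⟨hv₁ t, hv₂ t, ?_⟩,
    ⟨max N₁ N₂, fun u hu => ⟨hN₁ u (by omega), hN₂ u (by omega)⟩⟩,
    fun k hk => ?_⟩
  · show (if t ∈ W then true else false) = true →
      (rt₁ (w t) (b₁ t) (b₁ (t+1)) ||
       (rt₂ (w t) (b₂ t) (b₂ (t+1)) && (if t + 1 ∈ W then true else false))) = true
    intro hin
    have htW : t ∈ W := by
      by_contra hns
      rw [if_neg hns] at hin
      exact absurd hin (by simp)
    by_cases h1 : P₁ w t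
    · rw [hrt₁ t ⟨htW, h1⟩]
      simp
    · have hexp := (Pwu_expand P₁ P₂ w t).1 htW
      have h2 : P₂ w t ∧ Pwu P₁ P₂ w (t+1) := by tauto
      have hW2 : t + 1 ∈ W := h2.2
      rw [hrt₂ t ⟨htW, h1⟩, if_pos hW2]
      simp
  · show (if k ∈ W then true else false) = true
    rw [if_pos (hKW hk)]

/-- weak until, positive polarity, finite demand sets but only finite
completeness available for the left argument -/
lemma good_wu_pos_fin (h₁ : Good true false n₁ P₁) (h₂ : Good true true n₂ P₂) :
    Good true false (n₁ + n₂ + 1) (Pwu P₁ P₂) := by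
  classical
  obtain ⟨C₁, i₁, ok₁, rt₁, acc₁, hcard₁, hs₁, hc₁⟩ := h₁
  obtain ⟨C₂, i₂, ok₂, rt₂, acc₂, hcard₂, hs₂, hc₂⟩ := h₂
  refine ⟨Option (C₁ ⊕ C₂), inferInstance,
    fun a q q' => ok₁ a (fun c => q (some (.inl c))) (fun c => q' (some (.inl c))) ∧
      ok₂ a (fun c => q (some (.inr c))) (fun c => q' (some (.inr c))) ∧
      (q none = true →
        (rt₁ a (fun c => q (some (.inl c))) (fun c => q' (some (.inl c))) ||
         (rt₂ a (fun c => q (some (.inr c))) (fun c => q' (some (.inr c))) && q' none)) = true),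
    fun _ q _ => q none,
    fun q => acc₁ (fun c => q (some (.inl c))) ∧ acc₂ (fun c => q (some (.inr c))),
    by simp [Fintype.card_sum]; omega,
    fun w b hv ha t hrt => wu_pos_core hs₁ hs₂ w b hv ha t hrt, ?_⟩
  -- completeness
  intro w K hfin hK
  have hKfin : K.Finite := hfin rfl
  set G : Set ℕ := {t | Pg P₂ w t} with hGdef
  set Kb : Set ℕ := {k | k ∈ K ∧ k ∉ G} with hKbdef
  have hm : ∀ k ∈ Kb, ∃ m, k ≤ m ∧ P₁ w m ∧ ∀ j, k ≤ j → j < m → P₂ w j := by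
    rintro k ⟨hk, hg⟩
    have := hK k hk
    simp only [pol_true] at this
    rcases this with h | h
    · exact h
    · exact absurd h hg
  set m : ℕ → ℕ := fun k => if h : k ∈ Kb then Classical.choose (hm k h) else 0 with hmdef
  have hmspec : ∀ k ∈ Kb, k ≤ m k ∧ P₁ w (m k) ∧ ∀ j, k ≤ j → j < m k → P₂ w j := by
    intro k hk
    have := Classical.choose_spec (hm k hk)
    simpa [hmdef, dif_pos hk] using this
  set S : Set ℕ := {x | ∃ k ∈ Kb, k ≤ x ∧ x ≤ m k} with hSdef
  set K₁ : Set ℕ := m '' Kb with hK₁def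
  set K₂ : Set ℕ := {x | (∃ k ∈ Kb, k ≤ x ∧ x < m k) ∨ x ∈ G} with hK₂def
  have hKbfin : Kb.Finite := hKfin.subset fun x hx => hx.1
  obtain ⟨b₁, hv₁, ⟨N₁, hN₁⟩, hrt₁⟩ := hc₁ w K₁ (fun _ => hKbfin.image m)
    (by rintro x ⟨k, hk, rfl⟩; simpa using (hmspec k hk).2.1)
  obtain ⟨b₂, hv₂, ⟨N₂, hN₂⟩, hrt₂⟩ := hc₂ w K₂ (fun h => absurd h (by simp))
    (by
      rintro x (⟨k, hk, h1, h2⟩ | hg)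
      · simpa using (hmspec k hk).2.2 x h1 h2
      · simpa using hg x le_rfl)
  refine ⟨fun t c => match c with
      | some (.inl c) => b₁ t c
      | some (.inr c) => b₂ t c
      | none => if t ∈ S ∨ t ∈ G then true else false,
    fun t => ⟨hv₁ t, hv₂ t, ?_⟩,
    ⟨max N₁ N₂, fun u hu => ⟨hN₁ u (by omega), hN₂ u (by omega)⟩⟩,
    fun k hk => ?_⟩
  · show (if t ∈ S ∨ t ∈ G then true else false) = true →
      (rt₁ (w t) (b₁ t) (b₁ (t+1)) ||
       (rt₂ (w t) (b₂ t) (b₂ (t+1)) && (if t + 1 ∈ S ∨ t + 1 ∈ G then true else false))) = true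
    intro hin
    have htSG : t ∈ S ∨ t ∈ G := by
      by_contra hns
      rw [if_neg hns] at hin
      exact absurd hin (by simp)
    rcases htSG with htS | htG
    · by_cases h2 : ∃ k ∈ Kb, k ≤ t ∧ t < m k
      · obtain ⟨k', hk', hx1, hx2⟩ := h2
        have hb2 := hrt₂ t (Or.inl ⟨k', hk', hx1, hx2⟩)
        have ht1 : t + 1 ∈ S := ⟨k', hk', by omega, by omega⟩
        rw [hb2, if_pos (Or.inl ht1)]
        simp
      · obtain ⟨k, hk, h1', h2'⟩ := htS
        have htm : t = m k := by
          rcases Nat.lt_or_ge t (m k) with h | h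
          · exact absurd ⟨k, hk, h1', h⟩ h2
          · omega
        have hmem : t ∈ K₁ := ⟨k, hk, htm.symm⟩
        rw [hrt₁ t hmem]
        simp
    · have hb2 := hrt₂ t (Or.inr htG)
      have ht1 : t + 1 ∈ G := fun j hj => htG j (by omega)
      rw [hb2, if_pos (Or.inr ht1)]
      simp
  · show (if k ∈ S ∨ k ∈ G then true else false) = true
    by_cases hg : k ∈ G
    · rw [if_pos (Or.inr hg)]
    · have hkb : k ∈ Kb := ⟨hk, hg⟩
      rw [if_pos (Or.inl ⟨k, hkb, le_rfl, (hmspec k hkb).1⟩)]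

/-- weak until, negative polarity, finite demand sets -/
lemma good_wu_neg (h₁ : Good false false n₁ P₁) (h₂ : Good false false n₂ P₂) :
    Good false false (n₁ + n₂ + 1) (Pwu P₁ P₂) := by
  classical
  obtain ⟨C₁, i₁, ok₁, rt₁, acc₁, hcard₁, hs₁, hc₁⟩ := h₁
  obtain ⟨C₂, i₂, ok₂, rt₂, acc₂, hcard₂, hs₂, hc₂⟩ := h₂
  refine ⟨Option (C₁ ⊕ C₂), inferInstance,
    fun a q q' => ok₁ a (fun c => q (some (.inl c))) (fun c => q' (some (.inl c))) ∧
      ok₂ a (fun c => q (some (.inr c))) (fun c => q' (some (.inr c))) ∧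
      (q none = false →
        (rt₁ a (fun c => q (some (.inl c))) (fun c => q' (some (.inl c))) ||
         (rt₂ a (fun c => q (some (.inr c))) (fun c => q' (some (.inr c))) && q' none)) = false),
    fun _ q _ => q none,
    fun q => acc₁ (fun c => q (some (.inl c))) ∧ acc₂ (fun c => q (some (.inr c))) ∧
      q none = true,
    by simp [Fintype.card_sum]; omega, ?_, ?_⟩
  · -- soundness
    intro w b hv ha t hrt
    obtain ⟨N, hN⟩ := ha
    set b1 : ℕ → C₁ → Bool := fun t c => b t (some (.inl c)) with hb1
    set b2 : ℕ → C₂ → Bool := fun t c => b t (some (.inr c)) with hb2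
    have hv₁ : Valid ok₁ w b1 := fun u => (hv u).1
    have hv₂ : Valid ok₂ w b2 := fun u => (hv u).2.1
    have ha₁ : ∃ N, ∀ u, N ≤ u → acc₁ (b1 u) := ⟨N, fun u hu => (hN u hu).1⟩
    have ha₂ : ∃ N, ∀ u, N ≤ u → acc₂ (b2 u) := ⟨N, fun u hu => (hN u hu).2.1⟩
    have hex : ∃ u, t ≤ u ∧ b (u+1) none = true := by
      refine ⟨max t N, le_max_left _ _, (hN (max t N + 1) (by omega)).2.2⟩
    set k := Nat.find hex with hkdef
    obtain ⟨hk, hk1⟩ := Nat.find_spec hex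
    have chain : ∀ u, t ≤ u → u ≤ k → b u none = false := by
      intro u hu
      induction u, hu using Nat.le_induction with
      | base => exact fun _ => hrt
      | succ u hu IH =>
        intro hum
        have hbu := IH (by omega)
        cases hx : b (u+1) none
        · rfl
        · exact absurd ⟨hu, hx⟩ (Nat.find_min hex (by omega))
    have hcons : ∀ u, t ≤ u → u ≤ k →
        rt₁ (w u) (b1 u) (b1 (u+1)) = false ∧
        (rt₂ (w u) (b2 u) (b2 (u+1)) = false ∨ b (u+1) none = false) := by
      intro u h1 h2
      have himp := (hv u).2.2 (chain u h1 h2)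
      simp only [Bool.or_eq_false_iff, Bool.and_eq_false_iff] at himp
      exact himp
    have hnP₁ : ∀ u, t ≤ u → u ≤ k → ¬ P₁ w u := by
      intro u h1 h2 hP
      have := hs₁ w b1 hv₁ ha₁ u ((hcons u h1 h2).1)
      simp only [pol_false] at this
      exact this hP
    have hnP₂k : ¬ P₂ w k := by
      intro hP
      rcases (hcons k hk le_rfl).2 with h | h
      · have := hs₂ w b2 hv₂ ha₂ k h
        simp only [pol_false] at this
        exact this hP
      · rw [hk1] at h
        exact absurd h (by simp)
    simp only [pol_false]
    rintro (⟨mm, hm, hP1, hP2⟩ | hg)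
    · rcases le_or_gt mm k with h | h
      · exact hnP₁ mm hm h hP1
      · exact hnP₂k (hP2 k hk h)
    · exact hnP₂k (hg k hk)
  · -- completeness
    intro w K hfin hK
    have hKfin : K.Finite := hfin rfl
    set U : Set ℕ := {x | ∃ k ∈ K, k ≤ x ∧ ∀ j, k ≤ j → j < x → P₂ w j} with hUdef
    have hU1 : ∀ x ∈ U, ¬ P₁ w x := by
      rintro x ⟨k, hk, h1, h2⟩ hP1
      have := hK k hk
      simp only [pol_false] at this
      exact this (Or.inl ⟨x, h1, hP1, h2⟩)
    have hUnext : ∀ x ∈ U, P₂ w x → x + 1 ∈ U := by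
      rintro x ⟨k, hk, h1, h2⟩ hP2
      refine ⟨k, hk, by omega, fun j hj hj' => ?_⟩
      rcases Nat.lt_or_ge j x with h | h
      · exact h2 j hj h
      · have : j = x := by omega
        subst this; exact hP2
    set K₂ : Set ℕ := {x | x ∈ U ∧ x + 1 ∉ U} with hK₂def
    have hK₂P : ∀ x ∈ K₂, ¬ P₂ w x := fun x hx hP2 => hx.2 (hUnext x hx.1 hP2)
    -- U is finite
    have hj₀ : ∀ k ∈ K, ∃ j, k ≤ j ∧ ¬ P₂ w j := by
      intro k hk
      by_contra hno
      push_neg at hno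
      have := hK k hk
      simp only [pol_false] at this
      exact this (Or.inr hno)
    set j₀ : ℕ → ℕ := fun k => if h : k ∈ K then Classical.choose (hj₀ k h) else 0 with hj₀def
    have hj₀spec : ∀ k ∈ K, k ≤ j₀ k ∧ ¬ P₂ w (j₀ k) := by
      intro k hk
      have := Classical.choose_spec (hj₀ k hk)
      simpa [hj₀def, dif_pos hk] using this
    have hUfin : U.Finite := by
      refine ((hKfin.biUnion (fun k _ => Set.finite_Icc k (j₀ k))).subset ?_)
      rintro x ⟨k, hk, h1, h2⟩
      refine Set.mem_biUnion hk ⟨h1, ?_⟩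
      by_contra hgt
      push_neg at hgt
      exact (hj₀spec k hk).2 (h2 (j₀ k) (hj₀spec k hk).1 hgt)
    obtain ⟨B, hB⟩ := hUfin.bddAbove
    obtain ⟨b₁, hv₁, ⟨N₁, hN₁⟩, hrt₁⟩ := hc₁ w U (fun _ => hUfin)
      (fun x hx => by simpa using hU1 x hx)
    obtain ⟨b₂, hv₂, ⟨N₂, hN₂⟩, hrt₂⟩ := hc₂ w K₂ (fun _ => hUfin.subset fun x hx => hx.1)
      (fun x hx => by simpa using hK₂P x hx)
    refine ⟨fun t c => match c with
        | some (.inl c) => b₁ t c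
        | some (.inr c) => b₂ t c
        | none => if t ∈ U then false else true,
      fun t => ⟨hv₁ t, hv₂ t, ?_⟩,
      ⟨max (max N₁ N₂) (B + 1), fun u hu => ⟨hN₁ u (by omega), hN₂ u (by omega), ?_⟩⟩,
      fun k hk => ?_⟩
    · show (if t ∈ U then false else true) = false →
        (rt₁ (w t) (b₁ t) (b₁ (t+1)) ||
         (rt₂ (w t) (b₂ t) (b₂ (t+1)) && (if t + 1 ∈ U then false else true))) = false
      intro hin
      have htU : t ∈ U := by
        by_contra hns
        rw [if_neg hns] at hin
        exact absurd hin (by simp)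
      rw [hrt₁ t htU]
      by_cases h2 : t + 1 ∈ U
      · rw [if_pos h2]
        simp
      · rw [hrt₂ t ⟨htU, h2⟩]
        simp
    · show (if u ∈ U then false else true) = true
      have : u ∉ U := fun hin => by have := hB hin; omega
      rw [if_neg this]
    · show (if k ∈ U then false else true) = false
      have : k ∈ U := ⟨k, hk, le_rfl, fun j h1 h2 => absurd h2 (by omega)⟩
      rw [if_pos this]

end FixCombinators3

end TLFGProof
namespace TLFGProof

open LTL Classical

variable {V : Type}

/-- `Good` specialised to satisfaction of a formula. -/
def GS (s inf : Bool) (Φ : LTL V) : Prop :=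
  Good s inf (LTL.size Φ) (fun w t => Sat w Φ t)

section SemanticBridges

lemma sat_lsu_iff (ψ φ : LTL V) (w : Word V) (t : ℕ) :
    Sat w (lsu ψ φ) t ↔ Psu (fun w t => Sat w ψ t) (fun w t => Sat w φ t) w t := Iff.rfl

lemma pg_iff_sat_lG (φ : LTL V) (w : Word V) (t : ℕ) :
    Pg (fun w t => Sat w φ t) w t ↔ Sat w (lG φ) t := by
  show Pg _ w t ↔ ¬ Sat w (lsu (lnot φ) LTL.tt) t
  rw [sat_lsu_iff]
  constructor
  · rintro hg ⟨k, hk, hn, -⟩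
    exact hn (hg k hk)
  · intro h j hj
    by_contra hns
    exact h ⟨j, hj, hns, fun _ _ _ => trivial⟩

lemma pwu_false_iff_sat_lG (φ : LTL V) (w : Word V) (t : ℕ) :
    Pwu (fun (_ : Word V) (_ : ℕ) => False) (fun w t => Sat w φ t) w t ↔ Sat w (lG φ) t := by
  rw [← pg_iff_sat_lG]
  constructor
  · rintro (⟨m, _, h, -⟩ | hg)
    · exact absurd h id
    · exact hg
  · exact Or.inr

lemma pwu_iff_sat_lwu (ψ φ : LTL V) (w : Word V) (t : ℕ) :
    Pwu (fun w t => Sat w ψ t) (fun w t => Sat w φ t) w t ↔ Sat w (lwu ψ φ) t := by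
  show _ ↔ Sat w (lsu ψ φ) t ∨ Sat w (lG φ) t
  rw [sat_lsu_iff, ← pg_iff_sat_lG]
  exact Iff.rfl

lemma psu_tt_iff_sat_lF (φ : LTL V) (w : Word V) (t : ℕ) :
    Psu (fun w t => Sat w φ t) (fun (_ : Word V) (_ : ℕ) => True) w t ↔ Sat w (lF φ) t :=
  Iff.rfl

end SemanticBridges

section GSCombinators

variable {s inf : Bool} {φ ψ : LTL V}

lemma gs_var (s inf : Bool) (v : V) : GS s inf (LTL.var v : LTL V) := good_var s inf v

lemma gs_lnot (h : GS s inf φ) : GS (!s) inf (lnot φ) := good_not h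

lemma gs_lor (h₁ : GS s inf φ) (h₂ : GS s inf ψ) : GS s inf (lor φ ψ) := good_or h₁ h₂

lemma gs_lnext (h : GS s inf φ) : GS s inf (lnext φ) := good_next h

lemma gs_land (h₁ : GS s inf φ) (h₂ : GS s inf ψ) : GS s inf (land φ ψ) := by
  cases s with
  | true =>
    exact Good.mono_n (good_not (good_or (good_not h₁) (good_not h₂)))
      (by simp [LTL.land, LTL.size])
  | false =>
    exact Good.mono_n (good_not (good_or (good_not h₁) (good_not h₂)))
      (by simp [LTL.land, LTL.size])

lemma gs_lsu_pos (h₁ : GS true false φ) (h₂ : GS true false ψ) : GS true false (lsu φ ψ) :=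
  good_su_pos h₁ h₂

lemma gs_lsu_neg (h₁ : GS false true φ) (h₂ : GS false inf ψ) : GS false inf (lsu φ ψ) :=
  good_su_neg h₁ h₂

lemma gs_lF_pos (h : GS true false φ) : GS true false (lF φ) := by
  have := good_su_pos h (good_tt true false 1 le_rfl)
  exact Good.mono_n ((this).congr (fun w t => psu_tt_iff_sat_lF φ w t))
    (by simp [LTL.lF, LTL.size])

lemma gs_lF_neg (h : GS false true φ) : GS false inf (lF φ) := by
  have := good_su_neg (inf := inf) h (good_tt false inf 1 le_rfl)
  exact Good.mono_n ((this).congr (fun w t => psu_tt_iff_sat_lF φ w t))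
    (by simp [LTL.lF, LTL.size])

lemma gs_lG_pos (h : GS true true φ) : GS true true (lG φ) := by
  have := good_wu_pos_inf (good_ff true true 3 (by omega)) h
  exact Good.mono_n ((this).congr (fun w t => pwu_false_iff_sat_lG φ w t))
    (by simp [LTL.lG, LTL.lF, LTL.size]; omega)

lemma gs_lG_neg (h : GS false false φ) : GS false false (lG φ) := by
  have := good_wu_neg (good_ff false false 3 (by omega)) h
  exact Good.mono_n ((this).congr (fun w t => pwu_false_iff_sat_lG φ w t))
    (by simp [LTL.lG, LTL.lF, LTL.size]; omega)

lemma gs_lwu_pos_inf (h₁ : GS true true φ) (h₂ : GS true true ψ) : GS true true (lwu φ ψ) := by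
  have := good_wu_pos_inf h₁ h₂
  exact Good.mono_n ((this).congr (fun w t => pwu_iff_sat_lwu φ ψ w t))
    (by simp [LTL.lwu, LTL.lG, LTL.lF, LTL.size]; omega)

lemma gs_lwu_pos_fin (h₁ : GS true false φ) (h₂ : GS true true ψ) : GS true false (lwu φ ψ) := by
  have := good_wu_pos_fin h₁ h₂
  exact Good.mono_n ((this).congr (fun w t => pwu_iff_sat_lwu φ ψ w t))
    (by simp [LTL.lwu, LTL.lG, LTL.lF, LTL.size]; omega)

lemma gs_lwu_neg (h₁ : GS false false φ) (h₂ : GS false false ψ) : GS false false (lwu φ ψ) := by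
  have := good_wu_neg h₁ h₂
  exact Good.mono_n ((this).congr (fun w t => pwu_iff_sat_lwu φ ψ w t))
    (by simp [LTL.lwu, LTL.lG, LTL.lF, LTL.size]; omega)

end GSCombinators

section ClassInductions

/-- `TL_G` formulas at positive polarity, arbitrary demand sets. -/
lemma tlg_pos {Φ : LTL V} (h : TLG Φ) : GS true true Φ :=
  LTL.TLG.rec (motive_1 := fun φ _ => GS true true φ) (motive_2 := fun φ _ => GS false true φ)
    (fun v => gs_var true true v)
    (fun _ ih => gs_lnot ih)
    (fun _ _ ih₁ ih₂ => gs_land ih₁ ih₂)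
    (fun _ _ ih₁ ih₂ => gs_lor ih₁ ih₂)
    (fun _ ih => gs_lnext ih)
    (fun _ ih => gs_lG_pos ih)
    (fun _ _ ih₁ ih₂ => gs_lwu_pos_inf ih₁ ih₂)
    (fun v => gs_var false true v)
    (fun _ ih => gs_lnot ih)
    (fun _ _ ih₁ ih₂ => gs_land ih₁ ih₂)
    (fun _ _ ih₁ ih₂ => gs_lor ih₁ ih₂)
    (fun _ ih => gs_lnext ih)
    (fun _ ih => gs_lF_neg ih)
    (fun _ _ ih₁ ih₂ => gs_lsu_neg ih₁ ih₂)
    h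

/-- `TL_F` formulas at negative polarity, arbitrary demand sets. -/
lemma tlf_neg {Φ : LTL V} (h : TLF Φ) : GS false true Φ :=
  LTL.TLF.rec (motive_1 := fun φ _ => GS true true φ) (motive_2 := fun φ _ => GS false true φ)
    (fun v => gs_var true true v)
    (fun _ ih => gs_lnot ih)
    (fun _ _ ih₁ ih₂ => gs_land ih₁ ih₂)
    (fun _ _ ih₁ ih₂ => gs_lor ih₁ ih₂)
    (fun _ ih => gs_lnext ih)
    (fun _ ih => gs_lG_pos ih)
    (fun _ _ ih₁ ih₂ => gs_lwu_pos_inf ih₁ ih₂)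
    (fun v => gs_var false true v)
    (fun _ ih => gs_lnot ih)
    (fun _ _ ih₁ ih₂ => gs_land ih₁ ih₂)
    (fun _ _ ih₁ ih₂ => gs_lor ih₁ ih₂)
    (fun _ ih => gs_lnext ih)
    (fun _ ih => gs_lF_neg ih)
    (fun _ _ ih₁ ih₂ => gs_lsu_neg ih₁ ih₂)
    h

/-- `TL_F` formulas at positive polarity, finite demand sets. -/
lemma tlf_pos {Φ : LTL V} (h : TLF Φ) : GS true false Φ :=
  LTL.TLF.rec (motive_1 := fun φ _ => GS false false φ) (motive_2 := fun φ _ => GS true false φ)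
    (fun v => gs_var false false v)
    (fun _ ih => gs_lnot ih)
    (fun _ _ ih₁ ih₂ => gs_land ih₁ ih₂)
    (fun _ _ ih₁ ih₂ => gs_lor ih₁ ih₂)
    (fun _ ih => gs_lnext ih)
    (fun _ ih => gs_lG_neg ih)
    (fun _ _ ih₁ ih₂ => gs_lwu_neg ih₁ ih₂)
    (fun v => gs_var true false v)
    (fun _ ih => gs_lnot ih)
    (fun _ _ ih₁ ih₂ => gs_land ih₁ ih₂)
    (fun _ _ ih₁ ih₂ => gs_lor ih₁ ih₂)
    (fun _ ih => gs_lnext ih)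
    (fun _ ih => gs_lF_pos ih)
    (fun _ _ ih₁ ih₂ => gs_lsu_pos ih₁ ih₂)
    h

/-- `TL_G` formulas at negative polarity, finite demand sets. -/
lemma tlg_neg {Φ : LTL V} (h : TLG Φ) : GS false false Φ :=
  LTL.TLG.rec (motive_1 := fun φ _ => GS false false φ) (motive_2 := fun φ _ => GS true false φ)
    (fun v => gs_var false false v)
    (fun _ ih => gs_lnot ih)
    (fun _ _ ih₁ ih₂ => gs_land ih₁ ih₂)
    (fun _ _ ih₁ ih₂ => gs_lor ih₁ ih₂)
    (fun _ ih => gs_lnext ih)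
    (fun _ ih => gs_lG_neg ih)
    (fun _ _ ih₁ ih₂ => gs_lwu_neg ih₁ ih₂)
    (fun v => gs_var true false v)
    (fun _ ih => gs_lnot ih)
    (fun _ _ ih₁ ih₂ => gs_land ih₁ ih₂)
    (fun _ _ ih₁ ih₂ => gs_lor ih₁ ih₂)
    (fun _ ih => gs_lnext ih)
    (fun _ ih => gs_lF_pos ih)
    (fun _ _ ih₁ ih₂ => gs_lsu_pos ih₁ ih₂)
    h

/-- `TL_Prefix` formulas, both polarities, finite demand sets. -/
lemma tlp_both {Φ : LTL V} (h : TLPrefix Φ) : GS true false Φ ∧ GS false false Φ := by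
  induction h with
  | g h => exact ⟨(tlg_pos h).of_inf, tlg_neg h⟩
  | f h => exact ⟨tlf_pos h, (tlf_neg h).of_inf⟩
  | not h ih => exact ⟨gs_lnot ih.2, gs_lnot ih.1⟩
  | and h₁ h₂ ih₁ ih₂ => exact ⟨gs_land ih₁.1 ih₂.1, gs_land ih₁.2 ih₂.2⟩
  | or h₁ h₂ ih₁ ih₂ => exact ⟨gs_lor ih₁.1 ih₂.1, gs_lor ih₁.2 ih₂.2⟩

/-- `TL_FG` formulas at positive polarity, finite demand sets. -/
lemma tlfg_pos {Φ : LTL V} (h : TLFG Φ) : GS true false Φ :=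
  LTL.TLFG.rec (motive_1 := fun φ _ => GS false false φ) (motive_2 := fun φ _ => GS true false φ)
    (fun hp => (tlp_both hp).2)
    (fun _ ih => gs_lnot ih)
    (fun _ _ ih₁ ih₂ => gs_land ih₁ ih₂)
    (fun _ _ ih₁ ih₂ => gs_lor ih₁ ih₂)
    (fun _ ih => gs_lnext ih)
    (fun _ ih => gs_lG_neg ih)
    (fun _ _ ih₁ ih₂ => gs_lwu_neg ih₁ ih₂)
    (fun hψ _ ihφ => gs_lsu_neg (tlf_neg hψ) ihφ)
    (fun hp => (tlp_both hp).1)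
    (fun _ ih => gs_lnot ih)
    (fun _ _ ih₁ ih₂ => gs_land ih₁ ih₂)
    (fun _ _ ih₁ ih₂ => gs_lor ih₁ ih₂)
    (fun _ ih => gs_lnext ih)
    (fun _ ih => gs_lF_pos ih)
    (fun _ _ ih₁ ih₂ => gs_lsu_pos ih₁ ih₂)
    (fun _ hφ ihψ => gs_lwu_pos_fin ihψ (tlg_pos hφ))
    h

end ClassInductions

end TLFGProof
namespace TLFGProof

open LTL Classical

variable {V : Type}

/-- Arithmetic: `3^k + 1 ≤ 4^k` for `k ≥ 1`. -/
lemma three_pow_add_one_le_four_pow (k : ℕ) (hk : 1 ≤ k) : 3 ^ k + 1 ≤ 4 ^ k := by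
  induction k, hk using Nat.le_induction with
  | base => norm_num
  | succ k hk ih =>
    have h1 : 3 ^ (k+1) + 1 ≤ 3 * (3 ^ k + 1) := by rw [pow_succ]; omega
    have h3 : 3 * 4 ^ k ≤ 4 ^ (k+1) := by rw [pow_succ]; omega
    omega

lemma card_bound_aux (c n : ℕ) (h : c + 1 ≤ n) : 3 ^ 2 ^ c + 1 ≤ 2 ^ 2 ^ n := by
  have h1 : (1:ℕ) ≤ 2 ^ c := Nat.one_le_two_pow
  have h2 : 3 ^ 2 ^ c + 1 ≤ 4 ^ 2 ^ c := three_pow_add_one_le_four_pow _ h1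
  have h3 : (4:ℕ) ^ 2 ^ c = 2 ^ 2 ^ (c+1) := by
    rw [show (4:ℕ) = 2 ^ 2 from rfl, ← pow_mul, pow_succ, Nat.mul_comm]
  have h4 : (2:ℕ) ^ 2 ^ (c+1) ≤ 2 ^ 2 ^ n :=
    Nat.pow_le_pow_right (by norm_num) (Nat.pow_le_pow_right (by norm_num) h)
  omega

section Determinization

variable {C : Type}

/-- encoding of a pair `O ⊆ R` of sets of states as a `Fin 3`-valued function -/
noncomputable def encD (R O : Set (C → Bool)) : (C → Bool) → Fin 3 :=
  fun q => if q ∈ O then 2 else if q ∈ R then 1 else 0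

variable (ok : Set V → (C → Bool) → (C → Bool) → Prop)
variable (rt : Set V → (C → Bool) → (C → Bool) → Bool)
variable (acc : (C → Bool) → Prop)

def nextRD (R : Set (C → Bool)) (a : Set V) : Set (C → Bool) := {q' | ∃ q ∈ R, ok a q q'}

noncomputable def nextOD (O R' : Set (C → Bool)) (a : Set V) : Set (C → Bool) :=
  if O = ∅ then R' ∩ {q | acc q} else {q' | (∃ q ∈ O, ok a q q') ∧ q' ∈ R'} ∩ {q | acc q}

def R1D (a : Set V) : Set (C → Bool) := {q' | ∃ q, ok a q q' ∧ rt a q q' = true}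

noncomputable def deltaD :
    Option ((C → Bool) → Fin 3) → Set V → Option ((C → Bool) → Fin 3) := fun s a =>
  match s with
  | none => some (encD (R1D ok rt a) (R1D ok rt a ∩ {q | acc q}))
  | some f => some (encD (nextRD ok {q | f q ≠ 0} a)
      (nextOD ok acc {q | f q = 2} (nextRD ok {q | f q ≠ 0} a) a))

def FD : Set (Option ((C → Bool) → Fin 3)) := {s | ∃ f, s = some f ∧ ∃ q, f q = 2}

noncomputable def RsetD (w : Word V) (t : ℕ) : Set (C → Bool) :=
  {q | ∃ f, detRun (deltaD ok rt acc) none w t = some f ∧ f q ≠ 0}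

noncomputable def OsetD (w : Word V) (t : ℕ) : Set (C → Bool) :=
  {q | ∃ f, detRun (deltaD ok rt acc) none w t = some f ∧ f q = 2}

lemma encD_eq_two {R O : Set (C → Bool)} (hsub : O ⊆ R) (q : C → Bool) :
    encD R O q = 2 ↔ q ∈ O := by
  unfold encD
  by_cases h1 : q ∈ O
  · simp [h1]
  · by_cases h2 : q ∈ R
    · rw [if_neg h1, if_pos h2]
      exact ⟨fun h => absurd h (by decide), fun h => absurd h h1⟩
    · rw [if_neg h1, if_neg h2]
      exact ⟨fun h => absurd h (by decide), fun h => absurd h h1⟩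

lemma encD_ne_zero {R O : Set (C → Bool)} (hsub : O ⊆ R) (q : C → Bool) :
    encD R O q ≠ 0 ↔ q ∈ R := by
  unfold encD
  by_cases h1 : q ∈ O
  · rw [if_pos h1]
    exact ⟨fun _ => hsub h1, fun _ => by decide⟩
  · by_cases h2 : q ∈ R
    · rw [if_neg h1, if_pos h2]
      exact ⟨fun _ => h2, fun _ => by decide⟩
    · rw [if_neg h1, if_neg h2]
      exact ⟨fun h => absurd rfl h, fun h => absurd h h2⟩

lemma nextOD_subset (O R' : Set (C → Bool)) (a : Set V) :
    nextOD ok acc O R' a ⊆ R' := by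
  unfold nextOD
  split_ifs with h
  · exact Set.inter_subset_left
  · intro q hq
    exact hq.1.2

lemma nextOD_subset_acc (O R' : Set (C → Bool)) (a : Set V) :
    nextOD ok acc O R' a ⊆ {q | acc q} := by
  unfold nextOD
  split_ifs with h
  · exact Set.inter_subset_right
  · exact Set.inter_subset_right

variable {w : Word V}

lemma run_some : ∀ t, 1 ≤ t → ∃ f, detRun (deltaD ok rt acc) none w t = some f := by
  intro t ht
  obtain ⟨u, rfl⟩ : ∃ u, t = u + 1 := ⟨t - 1, by omega⟩
  show ∃ f, deltaD ok rt acc (detRun (deltaD ok rt acc) none w u) (w u) = some f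
  cases detRun (deltaD ok rt acc) none w u with
  | none => exact ⟨_, rfl⟩
  | some f => exact ⟨_, rfl⟩

lemma RsetD_of_some {t : ℕ} {f : (C → Bool) → Fin 3}
    (hf : detRun (deltaD ok rt acc) none w t = some f) :
    RsetD ok rt acc w t = {q | f q ≠ 0} ∧ OsetD ok rt acc w t = {q | f q = 2} := by
  constructor <;> ext q <;> constructor
  · rintro ⟨f', hf', h⟩
    rw [hf] at hf'
    injection hf' with h'
    rw [h']; exact h
  · intro h
    exact ⟨f, hf, h⟩
  · rintro ⟨f', hf', h⟩
    rw [hf] at hf'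
    injection hf' with h'
    rw [h']; exact h
  · intro h
    exact ⟨f, hf, h⟩

lemma RsetD_one :
    RsetD ok rt acc w 1 = R1D ok rt (w 0) ∧
    OsetD ok rt acc w 1 = R1D ok rt (w 0) ∩ {q | acc q} := by
  have hrun : detRun (deltaD ok rt acc) none w 1 =
      some (encD (R1D ok rt (w 0)) (R1D ok rt (w 0) ∩ {q | acc q})) := rfl
  obtain ⟨hR, hO⟩ := RsetD_of_some ok rt acc hrun
  rw [hR, hO]
  constructor <;> ext q
  · exact encD_ne_zero Set.inter_subset_left q
  · exact encD_eq_two Set.inter_subset_left q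

lemma RsetD_succ {t : ℕ} (ht : 1 ≤ t) :
    RsetD ok rt acc w (t+1) = nextRD ok (RsetD ok rt acc w t) (w t) ∧
    OsetD ok rt acc w (t+1) = nextOD ok acc (OsetD ok rt acc w t)
      (nextRD ok (RsetD ok rt acc w t) (w t)) (w t) := by
  obtain ⟨f, hf⟩ := run_some ok rt acc t ht
  obtain ⟨hR, hO⟩ := RsetD_of_some ok rt acc hf
  have hrun : detRun (deltaD ok rt acc) none w (t+1) =
      some (encD (nextRD ok {q | f q ≠ 0} (w t))
        (nextOD ok acc {q | f q = 2} (nextRD ok {q | f q ≠ 0} (w t)) (w t))) := by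
    show deltaD ok rt acc (detRun (deltaD ok rt acc) none w t) (w t) = _
    rw [hf]
    rfl
  obtain ⟨hR', hO'⟩ := RsetD_of_some ok rt acc hrun
  rw [hR', hO', hR, hO]
  constructor <;> ext q
  · exact encD_ne_zero (nextOD_subset ok acc _ _ _) q
  · exact encD_eq_two (nextOD_subset ok acc _ _ _) q

lemma memFD_iff (t : ℕ) :
    detRun (deltaD ok rt acc) none w t ∈ FD ↔ (OsetD ok rt acc w t).Nonempty := by
  cases hf : detRun (deltaD ok rt acc) none w t with
  | none =>
    constructor
    · rintro ⟨f, hf', -⟩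
      exact absurd hf' (by simp)
    · rintro ⟨q, f, hf', -⟩
      rw [hf] at hf'
      exact absurd hf' (by simp)
  | some f =>
    constructor
    · rintro ⟨f', hf', q, h⟩
      injection hf' with h'
      exact ⟨q, f, hf, by rw [h']; exact h⟩
    · rintro ⟨q, f', hf', h⟩
      rw [hf] at hf'
      injection hf' with h'
      exact ⟨f, rfl, q, by rw [h']; exact h⟩

lemma OsetD_subset_RsetD (t : ℕ) : OsetD ok rt acc w t ⊆ RsetD ok rt acc w t := by
  rintro q ⟨f, hf, h⟩
  exact ⟨f, hf, by rw [h]; decide⟩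

lemma OsetD_subset_acc {t : ℕ} (ht : 1 ≤ t) : OsetD ok rt acc w t ⊆ {q | acc q} := by
  obtain ⟨u, rfl⟩ : ∃ u, t = u + 1 := ⟨t - 1, by omega⟩
  rcases Nat.eq_zero_or_pos u with rfl | hu
  · rw [(RsetD_one ok rt acc).2]
    exact Set.inter_subset_right
  · rw [(RsetD_succ ok rt acc hu).2]
    exact nextOD_subset_acc ok acc _ _ _

end Determinization

end TLFGProof
namespace TLFGProof

open LTL Classical

variable {V : Type}

section Determinization2

variable {C : Type}
variable (ok : Set V → (C → Bool) → (C → Bool) → Prop)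
variable (rt : Set V → (C → Bool) → (C → Bool) → Bool)
variable (acc : (C → Bool) → Prop)
variable {w : Word V}

/-- accepted run from an accepted claim-sequence -/
lemma dcw_complete {b : ℕ → C → Bool} (hb : Valid ok w b)
    (haccb : ∃ N₀, ∀ t, N₀ ≤ t → acc (b t)) (hrt0 : rt (w 0) (b 0) (b 1) = true) :
    ∃ N, ∀ t, N ≤ t → detRun (deltaD ok rt acc) none w t ∈ FD := by
  classical
  obtain ⟨N₀, hN₀⟩ := haccb
  have hbR : ∀ t, 1 ≤ t → b t ∈ RsetD ok rt acc w t := by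
    intro t ht
    induction t, ht using Nat.le_induction with
    | base =>
      rw [(RsetD_one ok rt acc).1]
      exact ⟨b 0, hb 0, hrt0⟩
    | succ t ht ih =>
      rw [(RsetD_succ ok rt acc ht).1]
      exact ⟨b t, ih, hb t⟩
  have hstep1 : ∀ t, max 1 N₀ ≤ t → OsetD ok rt acc w t = ∅ →
      b (t+1) ∈ OsetD ok rt acc w (t+1) := by
    intro t ht hempty
    rw [(RsetD_succ ok rt acc (by omega)).2, hempty]
    unfold nextOD
    rw [if_pos rfl]
    refine ⟨?_, hN₀ (t+1) (by omega)⟩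
    rw [← (RsetD_succ ok rt acc (by omega)).1]
    exact hbR (t+1) (by omega)
  have hstep2 : ∀ t, max 1 N₀ ≤ t → b t ∈ OsetD ok rt acc w t →
      b (t+1) ∈ OsetD ok rt acc w (t+1) := by
    intro t ht hbO
    rw [(RsetD_succ ok rt acc (by omega)).2]
    have hne : OsetD ok rt acc w t ≠ ∅ := by
      intro h
      rw [h] at hbO
      exact Set.notMem_empty _ hbO
    unfold nextOD
    rw [if_neg hne]
    refine ⟨⟨⟨b t, hbO, hb t⟩, ?_⟩, hN₀ (t+1) (by omega)⟩
    rw [← (RsetD_succ ok rt acc (by omega)).1]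
    exact hbR (t+1) (by omega)
  by_cases hcase : ∀ t, max 1 N₀ ≤ t → (OsetD ok rt acc w t).Nonempty
  · exact ⟨max 1 N₀, fun t ht => (memFD_iff ok rt acc t).2 (hcase t ht)⟩
  · push_neg at hcase
    obtain ⟨t₀, ht₀, hempty⟩ := hcase
    have hempty' : OsetD ok rt acc w t₀ = ∅ := by
      first
      | exact hempty
      | exact Set.not_nonempty_iff_eq_empty.1 hempty
    have hchain : ∀ u, t₀ + 1 ≤ u → b u ∈ OsetD ok rt acc w u := by
      intro u hu
      induction u, hu using Nat.le_induction with
      | base => exact hstep1 t₀ ht₀ hempty' 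
      | succ u hu ih => exact hstep2 u (by omega) ih
    exact ⟨t₀ + 1, fun t ht => (memFD_iff ok rt acc t).2 ⟨b t, hchain t ht⟩⟩

/-- forward extendability within the breakpoint sets -/
def ExtD (w : Word V) (t : ℕ) (q : C → Bool) : Prop :=
  q ∈ OsetD ok rt acc w t ∧ ∀ t₂, t ≤ t₂ → ∃ c : ℕ → (C → Bool), c t = q ∧
    (∀ u, t ≤ u → u ≤ t₂ → c u ∈ OsetD ok rt acc w u) ∧
    (∀ u, t ≤ u → u < t₂ → ok (w u) (c u) (c (u+1)))

/-- claim-sequence from an accepted run -/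
lemma dcw_sound [Fintype C] {N : ℕ}
    (hN : ∀ t, N ≤ t → detRun (deltaD ok rt acc) none w t ∈ FD) :
    ∃ b, Valid ok w b ∧ (∃ N', ∀ t, N' ≤ t → acc (b t)) ∧ rt (w 0) (b 0) (b 1) = true := by
  classical
  set M := max N 1 with hM
  have hOne : ∀ t, M ≤ t → (OsetD ok rt acc w t).Nonempty :=
    fun t ht => (memFD_iff ok rt acc t).1 (hN t (by omega))
  have hpred : ∀ t, M ≤ t → ∀ q' ∈ OsetD ok rt acc w (t+1),
      acc q' ∧ ∃ q ∈ OsetD ok rt acc w t, ok (w t) q q' := by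
    intro t ht q' hq'
    rw [(RsetD_succ ok rt acc (by omega)).2] at hq'
    have hne : OsetD ok rt acc w t ≠ ∅ := Set.nonempty_iff_ne_empty.1 (hOne t ht)
    unfold nextOD at hq'
    rw [if_neg hne] at hq'
    exact ⟨hq'.2, hq'.1.1⟩
  have P1 : ∀ (d t₁ : ℕ), M ≤ t₁ → ∀ q ∈ OsetD ok rt acc w (t₁ + d),
      ∃ c : ℕ → (C → Bool), c (t₁ + d) = q ∧
        (∀ u, t₁ ≤ u → u ≤ t₁ + d → c u ∈ OsetD ok rt acc w u) ∧
        (∀ u, t₁ ≤ u → u < t₁ + d → ok (w u) (c u) (c (u+1))) := by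
    intro d
    induction d with
    | zero =>
      intro t₁ ht q hq
      refine ⟨fun _ => q, rfl, fun u h1 h2 => ?_, fun u h1 h2 => absurd h2 (by omega)⟩
      have : u = t₁ := by omega
      subst this
      simpa using hq
    | succ d ih =>
      intro t₁ ht q hq
      have hq' : q ∈ OsetD ok rt acc w ((t₁ + d) + 1) := by
        have he : t₁ + (d+1) = (t₁ + d) + 1 := by omega
        rwa [he] at hq
      obtain ⟨-, p, hp, hok⟩ := hpred (t₁ + d) (by omega) q hq'
      obtain ⟨c, hc1, hc2, hc3⟩ := ih t₁ ht p hp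
      refine ⟨Function.update c (t₁ + d + 1) q, ?_, ?_, ?_⟩
      · have he : t₁ + (d+1) = t₁ + d + 1 := by omega
        rw [he, Function.update_self]
      · intro u h1 h2
        rcases Nat.lt_or_ge u (t₁ + d + 1) with h | h
        · rw [Function.update_of_ne (by omega)]
          exact hc2 u h1 (by omega)
        · have he : u = t₁ + d + 1 := by omega
          subst he
          rw [Function.update_self]
          exact hq'
      · intro u h1 h2
        rcases Nat.lt_or_ge u (t₁ + d) with h | h
        · rw [Function.update_of_ne (by omega), Function.update_of_ne (by omega)]
          exact hc3 u h1 h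
        · have he : u = t₁ + d := by omega
          subst he
          rw [Function.update_of_ne (by omega), Function.update_self, hc1]
          exact hok
  have pigeon : ∀ (g : ℕ → (C → Bool)), ∃ q, (g ⁻¹' {q}).Infinite := by
    intro g
    obtain ⟨q, hq⟩ := Finite.exists_infinite_fiber g
    exact ⟨q, Set.infinite_coe_iff.1 hq⟩
  have P2 : ∃ q, ExtD ok rt acc w M q := by
    have hsel : ∀ d : ℕ, ∃ c : ℕ → (C → Bool),
        (∀ u, M ≤ u → u ≤ M + d → c u ∈ OsetD ok rt acc w u) ∧
        (∀ u, M ≤ u → u < M + d → ok (w u) (c u) (c (u+1))) := by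
      intro d
      obtain ⟨q, hq⟩ := hOne (M + d) (by omega)
      obtain ⟨c, -, hc2, hc3⟩ := P1 d M le_rfl q hq
      exact ⟨c, hc2, hc3⟩
    set g : ℕ → (C → Bool) := fun d => Classical.choose (hsel d) M with hg
    obtain ⟨q, hq⟩ := pigeon g
    obtain ⟨d₀, hd₀⟩ := hq.nonempty
    have hgd₀ : g d₀ = q := hd₀
    have hspec : ∀ d, (∀ u, M ≤ u → u ≤ M + d →
        Classical.choose (hsel d) u ∈ OsetD ok rt acc w u) ∧
        (∀ u, M ≤ u → u < M + d →
          ok (w u) (Classical.choose (hsel d) u) (Classical.choose (hsel d) (u+1))) :=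
      fun d => Classical.choose_spec (hsel d)
    refine ⟨q, ?_, ?_⟩
    · have := (hspec d₀).1 M le_rfl (by omega)
      rwa [show Classical.choose (hsel d₀) M = q from hgd₀] at this
    · intro t₂ ht₂
      obtain ⟨d, hd, hdge⟩ := hq.exists_gt t₂
      have hgd : g d = q := hd
      refine ⟨Classical.choose (hsel d), hgd, fun u h1 h2 => (hspec d).1 u h1 (by omega),
        fun u h1 h2 => (hspec d).2 u h1 (by omega)⟩
  have P3 : ∀ t q, M ≤ t → ExtD ok rt acc w t q →
      ∃ q', ok (w t) q q' ∧ ExtD ok rt acc w (t+1) q' := by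
    intro t q ht hext
    have hsel : ∀ d : ℕ, ∃ c : ℕ → (C → Bool), c t = q ∧
        (∀ u, t ≤ u → u ≤ t + 1 + d → c u ∈ OsetD ok rt acc w u) ∧
        (∀ u, t ≤ u → u < t + 1 + d → ok (w u) (c u) (c (u+1))) := by
      intro d
      obtain ⟨c, hc1, hc2, hc3⟩ := hext.2 (t + 1 + d) (by omega)
      exact ⟨c, hc1, hc2, hc3⟩
    set g : ℕ → (C → Bool) := fun d => Classical.choose (hsel d) (t+1) with hg
    obtain ⟨q', hq'⟩ := pigeon g
    obtain ⟨d₀, hd₀⟩ := hq'.nonempty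
    have hgd₀ : g d₀ = q' := hd₀
    have hspec : ∀ d, Classical.choose (hsel d) t = q ∧
        (∀ u, t ≤ u → u ≤ t + 1 + d →
          Classical.choose (hsel d) u ∈ OsetD ok rt acc w u) ∧
        (∀ u, t ≤ u → u < t + 1 + d →
          ok (w u) (Classical.choose (hsel d) u) (Classical.choose (hsel d) (u+1))) :=
      fun d => Classical.choose_spec (hsel d)
    refine ⟨q', ?_, ?_, ?_⟩
    · have := (hspec d₀).2.2 t le_rfl (by omega)
      rwa [(hspec d₀).1, show Classical.choose (hsel d₀) (t+1) = q' from hgd₀] at this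
    · have := (hspec d₀).2.1 (t+1) (by omega) (by omega)
      rwa [show Classical.choose (hsel d₀) (t+1) = q' from hgd₀] at this
    · intro t₂ ht₂
      obtain ⟨d, hd, hdge⟩ := hq'.exists_gt t₂
      have hgd : g d = q' := hd
      refine ⟨Classical.choose (hsel d), hgd, fun u h1 h2 => (hspec d).2.1 u (by omega) (by omega),
        fun u h1 h2 => (hspec d).2.2 u (by omega) (by omega)⟩
  obtain ⟨q₀, hq₀⟩ := P2
  have hq₀' : ExtD ok rt acc w (M + 0) q₀ := hq₀
  set nxt : ℕ → (C → Bool) → (C → Bool) := fun i q =>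
    if h : ExtD ok rt acc w (M + i) q then Classical.choose (P3 (M+i) q (by omega) h) else q
    with hnxt
  set β : ℕ → (C → Bool) := fun i => Nat.rec q₀ (fun i r => nxt i r) i with hβ
  have hβs : ∀ i, β (i+1) = nxt i (β i) := fun i => rfl
  have hβE : ∀ i, ExtD ok rt acc w (M + i) (β i) := by
    intro i
    induction i with
    | zero => exact hq₀'
    | succ i ih =>
      rw [hβs i]
      simp only [hnxt]
      rw [dif_pos ih]
      exact (Classical.choose_spec (P3 (M+i) (β i) (by omega) ih)).2
  have hlink : ∀ i, ok (w (M + i)) (β i) (β (i+1)) := by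
    intro i
    rw [hβs i]
    simp only [hnxt]
    rw [dif_pos (hβE i)]
    exact (Classical.choose_spec (P3 (M+i) (β i) (by omega) (hβE i))).1
  have hβO : ∀ i, β i ∈ OsetD ok rt acc w (M + i) := fun i => (hβE i).1
  have hβ0R : β 0 ∈ RsetD ok rt acc w M := OsetD_subset_RsetD ok rt acc M (hβO 0)
  have hpre : ∀ t, 1 ≤ t → ∀ q ∈ RsetD ok rt acc w t, ∃ b : ℕ → (C → Bool),
      b t = q ∧ (∀ u, u < t → ok (w u) (b u) (b (u+1))) ∧ rt (w 0) (b 0) (b 1) = true := by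
    intro t ht
    induction t, ht using Nat.le_induction with
    | base =>
      intro q hq
      rw [(RsetD_one ok rt acc).1] at hq
      obtain ⟨p, hok, hrtp⟩ := hq
      refine ⟨fun u => if u = 0 then p else q, by norm_num, fun u hu => ?_, ?_⟩
      · have : u = 0 := by omega
        subst this
        norm_num
        exact hok
      · norm_num
        exact hrtp
    | succ t ht ih =>
      intro q hq
      rw [(RsetD_succ ok rt acc ht).1] at hq
      obtain ⟨p, hp, hok⟩ := hq
      obtain ⟨b, hb1, hb2, hb3⟩ := ih p hp
      refine ⟨Function.update b (t+1) q, Function.update_self _ _ _, fun u hu => ?_, ?_⟩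
      · rcases Nat.lt_or_ge u t with h | h
        · rw [Function.update_of_ne (by omega), Function.update_of_ne (by omega)]
          exact hb2 u h
        · have : u = t := by omega
          subst this
          rw [Function.update_of_ne (by omega), Function.update_self, hb1]
          exact hok
      · rw [Function.update_of_ne (by omega), Function.update_of_ne (by omega)]
        exact hb3
  obtain ⟨b₀, hb₀1, hb₀2, hb₀3⟩ := hpre M (by omega) (β 0) hβ0R
  refine ⟨fun u => if u ≤ M then b₀ u else β (u - M), ?_, ?_, ?_⟩
  · intro u
    show ok (w u) (if u ≤ M then b₀ u else β (u - M))
      (if u + 1 ≤ M then b₀ (u+1) else β (u + 1 - M))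
    rcases Nat.lt_or_ge u M with h | h
    · rw [if_pos (by omega), if_pos (by omega)]
      exact hb₀2 u h
    · by_cases h0 : u = M
      · have e : u + 1 - M = 1 := by omega
        rw [if_pos (by omega), if_neg (by omega), e, h0, hb₀1]
        exact hlink 0
      · rw [if_neg (by omega), if_neg (by omega)]
        have := hlink (u - M)
        have e1 : M + (u - M) = u := by omega
        have e2 : u - M + 1 = u + 1 - M := by omega
        rw [e1, e2] at this
        exact this
  · refine ⟨M + 1, fun u hu => ?_⟩
    show acc (if u ≤ M then b₀ u else β (u - M))
    rw [if_neg (by omega)]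
    have hE := hβO (u - M)
    have e1 : M + (u - M) = u := by omega
    rw [e1] at hE
    exact OsetD_subset_acc ok rt acc (by omega) hE
  · show rt (w 0) (if 0 ≤ M then b₀ 0 else β (0 - M)) (if 1 ≤ M then b₀ 1 else β (1 - M)) = true
    rw [if_pos (by omega : (0:ℕ) ≤ M), if_pos (by omega : (1:ℕ) ≤ M)]
    exact hb₀3

end Determinization2

end TLFGProof
/-- every `TL_FG` formula `Φ` is recognized by a deterministic
ω-automaton with a co-Büchi acceptance condition and at most `2 ^ 2 ^ |Φ|` states. -/
theorem tlFG_deterministic_cobuechi_automaton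
    {V : Type} [Fintype V] (Φ : LTL V) (hΦ : LTL.TLFG Φ) :
    ∃ (S : Type) (_ : Fintype S) (s0 : S) (δ : S → Set V → S) (F : Set S),
      Fintype.card S ≤ 2 ^ (2 ^ LTL.size Φ) ∧
      ∀ w : ℕ → Set V,
        ((∃ N, ∀ t, N ≤ t → detRun δ s0 w t ∈ F) ↔ LTL.Sat w Φ 0) := by
  classical
  obtain ⟨C, iC, ok, rt, acc, hcard, hsound, hcomp⟩ := TLFGProof.tlfg_pos hΦ
  letI := iC
  letI : DecidableEq C := Classical.decEq C
  letI : DecidableEq (C → Bool) := Classical.decEq _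
  refine ⟨Option ((C → Bool) → Fin 3), inferInstance, none, TLFGProof.deltaD ok rt acc,
    TLFGProof.FD, ?_, ?_⟩
  · have h1 : Fintype.card (Option ((C → Bool) → Fin 3)) =
        3 ^ 2 ^ Fintype.card C + 1 := by
      rw [Fintype.card_option, Fintype.card_fun, Fintype.card_fun, Fintype.card_fin,
        Fintype.card_bool]
    rw [h1]
    exact TLFGProof.card_bound_aux _ _ hcard
  · intro w
    constructor
    · rintro ⟨N, hN⟩
      obtain ⟨b, hv, ha, hrt⟩ := TLFGProof.dcw_sound ok rt acc hN
      have := hsound w b hv ha 0 hrt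
      simpa using this
    · intro hsat
      obtain ⟨b, hv, ha, hrt⟩ := hcomp w {0} (fun _ => Set.finite_singleton 0)
        (fun k hk => by rw [Set.mem_singleton_iff] at hk; subst hk; simpa using hsat)
      exact TLFGProof.dcw_complete ok rt acc hv ha (hrt 0 rfl)
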